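/- arXiv:0707.3187 — 6 statements merged into one kernel-verified Lean document; each statement's English description precedes it below -/
import Mathlib

section
/- For every complex z with Re(z) > −1, lim_{N→∞} N^{−z²/2} · e^{zN} · ∏_{n=1}^N (1 + z/n)^{−n} = (A^z · exp(z²/2) · G(1+z))^{−1}, where A = √(e/(2π)). -/
open Filter Topology


private lemma aux_ne (z : ℂ) (hz : -1 < z.re) (n : ℕ) : 1 + z / ((n : ℂ) + 1) ≠ 0 := by
  intro h
  have hn : ((n : ℂ) + 1) ≠ 0 := Nat.cast_add_one_ne_zero n
  have hzz : z = -((n : ℂ) + 1) := by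
    field_simp at h
    linear_combination h
  have h2 := congrArg Complex.re hzz
  simp only [Complex.neg_re, Complex.add_re, Complex.natCast_re, Complex.one_re] at h2
  have hn0 : (0:ℝ) ≤ (n:ℝ) := Nat.cast_nonneg n
  rw [h2] at hz
  linarith

private lemma aux_norm (n : ℕ) : ‖((n : ℂ) + 1)‖ = (n : ℝ) + 1 := by
  rw [show ((n : ℂ) + 1) = ((n + 1 : ℕ) : ℂ) by push_cast; ring,
    Complex.norm_natCast]
  push_cast
  ring

private lemma aux_summable (z : ℂ) :
    Summable (fun n : ℕ => ((n : ℂ) + 1) * Complex.log (1 + z / ((n : ℂ) + 1)) - z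
      + z ^ 2 / (2 * ((n : ℂ) + 1))) := by
  set C := ‖z‖ with hC
  have hsum : Summable (fun n : ℕ => (2 * C ^ 3 / 3) * (1 / ((n : ℝ) + 1) ^ 2)) := by
    apply Summable.mul_left
    have h := (Real.summable_one_div_nat_pow (p := 2)).mpr one_lt_two
    have := (summable_nat_add_iff 1).mpr h
    simpa [Nat.cast_add] using this
  apply Summable.of_norm_bounded_eventually_nat hsum
  filter_upwards [eventually_ge_atTop ⌈2 * C⌉₊] with n hn
  have hnn : (2 : ℝ) * C ≤ (n : ℝ) := by
    calc (2:ℝ) * C ≤ (⌈2 * C⌉₊ : ℝ) := Nat.le_ceil _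
    _ ≤ (n : ℝ) := by exact_mod_cast hn
  have hpos : (0 : ℝ) < (n : ℝ) + 1 := by positivity
  have hcne : ((n : ℂ) + 1) ≠ 0 := Nat.cast_add_one_ne_zero n
  set w := z / ((n : ℂ) + 1) with hw
  have hwnorm : ‖w‖ = C / ((n : ℝ) + 1) := by
    rw [hw, norm_div, aux_norm]
  have hw2 : ‖w‖ ≤ 1 / 2 := by
    rw [hwnorm, div_le_div_iff₀ hpos two_pos]
    linarith
  have hw1 : ‖w‖ < 1 := lt_of_le_of_lt hw2 (by norm_num)
  have hTay : Complex.logTaylor 3 w = w - w ^ 2 / 2 := by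
    simp [Complex.logTaylor, Finset.sum_range_succ]
    ring
  have h1 : ((n : ℂ) + 1) * (w - w ^ 2 / 2) = z - z ^ 2 / (2 * ((n : ℂ) + 1)) := by
    rw [hw]; field_simp
  have heq : ((n : ℂ) + 1) * Complex.log (1 + z / ((n : ℂ) + 1)) - z
      + z ^ 2 / (2 * ((n : ℂ) + 1))
      = ((n : ℂ) + 1) * (Complex.log (1 + w) - Complex.logTaylor 3 w) := by
    rw [hTay, mul_sub, h1, hw]; ring
  rw [heq]
  have hlog := Complex.norm_log_sub_logTaylor_le 2 hw1
  have hlog' : ‖Complex.log (1 + w) - Complex.logTaylor 3 w‖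
      ≤ (C / ((n : ℝ) + 1)) ^ 3 * (1 - C / ((n : ℝ) + 1))⁻¹ / 3 := by
    rw [← hwnorm]
    convert hlog using 2 <;> norm_num
  have hinv : (1 - C / ((n : ℝ) + 1))⁻¹ ≤ 2 := by
    rw [← hwnorm]
    have h2 : (2:ℝ)⁻¹ ≤ 1 - ‖w‖ := by linarith
    calc (1 - ‖w‖)⁻¹ ≤ ((2:ℝ)⁻¹)⁻¹ := by
          apply inv_anti₀ (by norm_num) h2
      _ = 2 := by norm_num
  calc ‖((n : ℂ) + 1) * (Complex.log (1 + w) - Complex.logTaylor 3 w)‖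
      = ((n : ℝ) + 1) * ‖Complex.log (1 + w) - Complex.logTaylor 3 w‖ := by
        rw [norm_mul, aux_norm]
    _ ≤ ((n : ℝ) + 1) * ((C / ((n : ℝ) + 1)) ^ 3 * (1 - C / ((n : ℝ) + 1))⁻¹ / 3) :=
        mul_le_mul_of_nonneg_left hlog' (le_of_lt hpos)
    _ ≤ ((n : ℝ) + 1) * ((C / ((n : ℝ) + 1)) ^ 3 * 2 / 3) := by
        gcongr
    _ = 2 * C ^ 3 / 3 * (1 / ((n : ℝ) + 1) ^ 2) := by
        field_simp

/-- The Barnes G-function, defined via its convergent infinite product representation: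
`G(1+z) = (2π)^{z/2} exp(−[(1+γ)z² + z]/2) ∏_{n=1}^∞ (1+z/n)^n exp(−z + z²/(2n))`,
where `γ` is the Euler–Mascheroni constant. -/
noncomputable def barnesG (w : ℂ) : ℂ :=
  (2 * Real.pi : ℂ) ^ ((w - 1) / 2) *
    Complex.exp (-(((1 + (Real.eulerMascheroniConstant : ℂ)) * (w - 1) ^ 2 + (w - 1)) / 2)) *
    ∏' n : ℕ, ((1 + (w - 1) / (n + 1)) ^ (n + 1) *
      Complex.exp (-(w - 1) + (w - 1) ^ 2 / (2 * ((n : ℂ) + 1))))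

/-- For every complex `z` with `Re z > −1`,
`lim_{N→∞} N^{−z²/2} · e^{zN} · ∏_{n=1}^N (1 + z/n)^{−n} = (A^z · exp(z²/2) · G(1+z))⁻¹`,
where `A = √(e/(2π))`. -/
theorem stmt1 (z : ℂ) (hz : -1 < z.re) :
    Tendsto (fun N : ℕ =>
        (N : ℂ) ^ (-(z ^ 2) / 2) * Complex.exp (z * N) *
          (∏ n ∈ Finset.Icc 1 N, (1 + z / n) ^ n)⁻¹)
      atTop
      (𝓝 (((Real.sqrt (Real.exp 1 / (2 * Real.pi)) : ℂ) ^ z *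
        Complex.exp (z ^ 2 / 2) * barnesG (1 + z))⁻¹)) := by
  set γ : ℝ := Real.eulerMascheroniConstant with hγ
  set g : ℕ → ℂ := fun n => ((n : ℂ) + 1) * Complex.log (1 + z / ((n : ℂ) + 1)) - z
      + z ^ 2 / (2 * ((n : ℂ) + 1)) with hgdef
  have hsum : Summable g := aux_summable z
  set T : ℂ := ∑' n, g n with hT
  have hne : ∀ n : ℕ, (1 + z / ((n : ℂ) + 1)) ≠ 0 := aux_ne z hz
  have hcne : ∀ n : ℕ, ((n : ℂ) + 1) ≠ 0 := fun n => Nat.cast_add_one_ne_zero n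
  -- exp of each term
  have hexp : ∀ n : ℕ, Complex.exp (g n)
      = (1 + z / ((n : ℂ) + 1)) ^ (n + 1) * Complex.exp (-z + z ^ 2 / (2 * ((n : ℂ) + 1))) := by
    intro n
    rw [show g n = ((n : ℂ) + 1) * Complex.log (1 + z / ((n : ℂ) + 1))
        + (-z + z ^ 2 / (2 * ((n : ℂ) + 1))) from by rw [hgdef]; ring]
    rw [Complex.exp_add]
    congr 1
    rw [show ((n : ℂ) + 1) = ((n + 1 : ℕ) : ℂ) by push_cast; ring,
      Complex.exp_nat_mul, Complex.exp_log (show (1 : ℂ) + z / ((n + 1 : ℕ) : ℂ) ≠ 0 by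
        push_cast; exact hne n)]
  -- the infinite product
  have hprod : HasProd (fun n : ℕ => (1 + z / ((n : ℂ) + 1)) ^ (n + 1)
      * Complex.exp (-z + z ^ 2 / (2 * ((n : ℂ) + 1)))) (Complex.exp T) := by
    have h := hsum.hasSum.cexp
    refine h.congr_fun fun n => ?_
    exact (hexp n).symm
  have htprod : (∏' n : ℕ, ((1 + z / ((n : ℂ) + 1)) ^ (n + 1)
      * Complex.exp (-z + z ^ 2 / (2 * ((n : ℂ) + 1))))) = Complex.exp T := hprod.tprod_eq
  -- partial products converge
  have hpartial : Tendsto (fun N : ℕ => Complex.exp (∑ i ∈ Finset.range N, g i)) atTop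
      (𝓝 (Complex.exp T)) :=
    (Complex.continuous_exp.tendsto _).comp hsum.hasSum.tendsto_sum_nat
  have hH := Real.tendsto_harmonic_sub_log
  have h1 : Tendsto (fun N : ℕ => Complex.exp ((z ^ 2 / 2) *
      (((harmonic N : ℝ) : ℂ) - ((Real.log N : ℝ) : ℂ)))) atTop
      (𝓝 (Complex.exp ((z ^ 2 / 2) * (γ : ℂ)))) := by
    apply (Complex.continuous_exp.tendsto _).comp
    apply Tendsto.const_mul
    have h2 := (Complex.continuous_ofReal.tendsto γ).comp hH
    refine h2.congr fun N => ?_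
    simp only [Function.comp_apply, Complex.ofReal_sub]
  have hmain := h1.mul (hpartial.inv₀ (Complex.exp_ne_zero T))
  -- harmonic number cast
  have hharm : ∀ N : ℕ, ((harmonic N : ℝ) : ℂ) = ∑ i ∈ Finset.range N, ((i : ℂ) + 1)⁻¹ := by
    intro N
    rw [harmonic]
    push_cast
    rfl
  -- product over Icc vs range
  have hprodIcc : ∀ N : ℕ, (∏ n ∈ Finset.Icc 1 N, (1 + z / (n : ℂ)) ^ n)
      = ∏ i ∈ Finset.range N, (1 + z / ((i : ℂ) + 1)) ^ (i + 1) := by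
    intro N
    rw [← Finset.Ico_add_one_right_eq_Icc, Finset.prod_Ico_eq_prod_range]
    refine Finset.prod_congr rfl fun i _ => ?_
    rw [add_comm 1 i]
    norm_cast
  -- key product identity
  have hb : ∀ N : ℕ, Complex.exp (∑ i ∈ Finset.range N, g i)
      = (∏ n ∈ Finset.Icc 1 N, (1 + z / (n : ℂ)) ^ n) * Complex.exp (-(z * N))
        * Complex.exp ((z ^ 2 / 2) * ((harmonic N : ℝ) : ℂ)) := by
    intro N
    rw [Complex.exp_sum]
    calc ∏ i ∈ Finset.range N, Complex.exp (g i)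
        = ∏ i ∈ Finset.range N, ((1 + z / ((i : ℂ) + 1)) ^ (i + 1) * Complex.exp (-z)
            * Complex.exp (z ^ 2 / (2 * ((i : ℂ) + 1)))) :=
          Finset.prod_congr rfl fun i _ => by rw [hexp i, Complex.exp_add, ← mul_assoc]
      _ = (∏ i ∈ Finset.range N, (1 + z / ((i : ℂ) + 1)) ^ (i + 1))
            * (∏ _i ∈ Finset.range N, Complex.exp (-z))
            * (∏ i ∈ Finset.range N, Complex.exp (z ^ 2 / (2 * ((i : ℂ) + 1)))) := by
          rw [Finset.prod_mul_distrib, Finset.prod_mul_distrib]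
      _ = (∏ n ∈ Finset.Icc 1 N, (1 + z / (n : ℂ)) ^ n) * Complex.exp (-(z * N))
            * Complex.exp ((z ^ 2 / 2) * ((harmonic N : ℝ) : ℂ)) := by
          rw [hprodIcc N]
          congr 1
          · congr 1
            rw [Finset.prod_const, Finset.card_range, ← Complex.exp_nat_mul]
            congr 1
            ring
          · rw [← Complex.exp_sum]
            congr 1
            rw [hharm, Finset.mul_sum]
            refine Finset.sum_congr rfl fun i _ => ?_
            rw [← div_eq_mul_inv, div_div]
  -- cpow of N as exponential
  have hcpow : ∀ N : ℕ, 1 ≤ N → (N : ℂ) ^ (-(z ^ 2) / 2)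
      = Complex.exp (-(z ^ 2) / 2 * ((Real.log N : ℝ) : ℂ)) := by
    intro N hN
    have hN0 : (N : ℂ) ≠ 0 := Nat.cast_ne_zero.mpr (by omega)
    rw [Complex.cpow_def_of_ne_zero hN0, Complex.natCast_log, mul_comm]
  have hPne : ∀ N : ℕ, (∏ n ∈ Finset.Icc 1 N, (1 + z / (n : ℂ)) ^ n) ≠ 0 := by
    intro N
    rw [hprodIcc N]
    exact Finset.prod_ne_zero_iff.mpr fun i _ => pow_ne_zero _ (hne i)
  have hkey : ∀ (x y u P : ℂ), Complex.exp x * (P * Complex.exp y * Complex.exp u)⁻¹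
      = Complex.exp (x - y - u) * P⁻¹ := by
    intro x y u P
    rw [mul_inv, mul_inv, ← Complex.exp_neg, ← Complex.exp_neg]
    have h3 : Complex.exp x * Complex.exp (-y) * Complex.exp (-u)
        = Complex.exp (x - y - u) := by
      rw [show x - y - u = x + -y + -u by ring, Complex.exp_add, Complex.exp_add]
    calc Complex.exp x * (P⁻¹ * Complex.exp (-y) * Complex.exp (-u))
        = Complex.exp x * Complex.exp (-y) * Complex.exp (-u) * P⁻¹ := by ring
      _ = Complex.exp (x - y - u) * P⁻¹ := by rw [h3]
  have heq : ∀ᶠ N : ℕ in atTop,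
      Complex.exp (z ^ 2 / 2 * (((harmonic N : ℝ) : ℂ) - ((Real.log N : ℝ) : ℂ)))
        * (Complex.exp (∑ i ∈ Finset.range N, g i))⁻¹
      = (N : ℂ) ^ (-(z ^ 2) / 2) * Complex.exp (z * N)
        * (∏ n ∈ Finset.Icc 1 N, (1 + z / n) ^ n)⁻¹ := by
    filter_upwards [eventually_ge_atTop 1] with N hN
    rw [hb N, hcpow N hN, hkey, ← Complex.exp_add]
    congr 2
    ring
  have hval : Complex.exp (z ^ 2 / 2 * (γ : ℂ)) * (Complex.exp T)⁻¹
      = (((Real.sqrt (Real.exp 1 / (2 * Real.pi)) : ℝ) : ℂ) ^ z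
        * Complex.exp (z ^ 2 / 2) * barnesG (1 + z))⁻¹ := by
    have hπ : (0:ℝ) < 2 * Real.pi := by positivity
    have hA0 : (0:ℝ) < Real.sqrt (Real.exp 1 / (2 * Real.pi)) :=
      Real.sqrt_pos.mpr (by positivity)
    have hA : ((Real.sqrt (Real.exp 1 / (2 * Real.pi)) : ℝ) : ℂ) ^ z
        = Complex.exp (((Real.log (Real.sqrt (Real.exp 1 / (2 * Real.pi))) : ℝ) : ℂ) * z) := by
      rw [Complex.cpow_def_of_ne_zero (by exact_mod_cast hA0.ne'),
        ← Complex.ofReal_log hA0.le]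
    have hlogA : Real.log (Real.sqrt (Real.exp 1 / (2 * Real.pi)))
        = (1 - Real.log (2 * Real.pi)) / 2 := by
      rw [Real.log_sqrt (by positivity), Real.log_div (Real.exp_ne_zero 1) (by positivity),
        Real.log_exp]
    have h2π : (2 * (Real.pi : ℂ)) ^ (z / 2)
        = Complex.exp (((Real.log (2 * Real.pi) : ℝ) : ℂ) * (z / 2)) := by
      rw [show (2 * (Real.pi : ℂ)) = (((2 * Real.pi : ℝ)) : ℂ) by push_cast; ring,
        Complex.cpow_def_of_ne_zero (by exact_mod_cast hπ.ne'),
        ← Complex.ofReal_log hπ.le]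
    simp only [barnesG, add_sub_cancel_left]
    rw [htprod, hA, hlogA, h2π]
    rw [← Complex.exp_neg]
    simp only [← Complex.exp_add, mul_inv]
    rw [← Complex.exp_neg, ← hγ]
    congr 1
    push_cast
    ring
  have hfinal := (hmain.congr' heq)
  rw [hval] at hfinal
  exact hfinal
end

section
/- For every complex λ with Re(λ) > −1, lim_{N→∞} N^{−λ²/2} · (∏_{j=1}^N Γ(j+λ)/Γ(j)) · exp(−λ Σ_{j=1}^N ψ(j)) = (A^λ · G(1+λ))^{−1}, where A = √(e/(2π)) and ψ = Γ'/Γ is the digamma function. -/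
open Filter Topology

/-- The digamma function `ψ = Γ'/Γ` on the reals. -/
noncomputable def digamma (x : ℝ) : ℝ := deriv Real.Gamma x / Real.Gamma x

namespace Stmt5
open Finset

noncomputable section

variable (l : ℂ)

def zz (k : ℕ) : ℂ := l / ((k : ℂ) + 1)

lemma kc1 (k : ℕ) : ((k : ℂ) + 1) ≠ 0 := Nat.cast_add_one_ne_zero k

lemma norm_zz (k : ℕ) : ‖zz l k‖ = ‖l‖ / ((k : ℝ) + 1) := by
  rw [zz, norm_div]
  congr 1
  have : ((k : ℂ) + 1) = (((k : ℝ) + 1 : ℝ) : ℂ) := by push_cast; ring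
  rw [this, Complex.norm_real, Real.norm_of_nonneg (by positivity)]

variable {l}

lemma one_add_zz_ne (hl : -1 < l.re) (k : ℕ) : 1 + zz l k ≠ 0 := by
  have hre : (1 + zz l k).re = 1 + l.re / ((k : ℝ) + 1) := by
    have : zz l k = l / (((k : ℝ) + 1 : ℝ) : ℂ) := by rw [zz]; push_cast; ring
    rw [Complex.add_re, Complex.one_re, this, Complex.div_ofReal_re]
  have hk : (0 : ℝ) < (k : ℝ) + 1 := by positivity
  have h2 : -1 ≤ l.re / ((k : ℝ) + 1) := by
    rw [le_div_iff₀ hk]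
    nlinarith [Nat.cast_nonneg (α := ℝ) k]
  intro H
  rw [H] at hre
  simp only [Complex.zero_re] at hre
  -- 0 = 1 + l.re/(k+1) with RHS ≥ 0; need strict
  have h3 : -1 < l.re / ((k : ℝ) + 1) := by
    rcases lt_or_ge l.re 0 with h | h
    · rw [lt_div_iff₀ hk]; nlinarith [Nat.cast_nonneg (α := ℝ) k]
    · have : 0 ≤ l.re / ((k:ℝ)+1) := by positivity
      linarith
  linarith

variable (l)

def hh (k : ℕ) : ℂ := Complex.log (1 + zz l k) - zz l k

def gg (k : ℕ) : ℂ := ((k : ℂ) + 1) * Complex.log (1 + zz l k) - l + l ^ 2 / (2 * ((k : ℂ) + 1))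

lemma gg_eq (k : ℕ) :
    gg l k = ((k : ℂ) + 1) * (Complex.log (1 + zz l k) - zz l k + (zz l k) ^ 2 / 2) := by
  rw [gg, zz]
  field_simp [kc1 k]

lemma quad_bound {w : ℂ} (hw : ‖w‖ ≤ 1 / 2) : ‖Complex.log (1 + w) - w‖ ≤ ‖w‖ ^ 2 := by
  have h1 : ‖w‖ < 1 := lt_of_le_of_lt hw (by norm_num)
  refine (Complex.norm_log_one_add_sub_self_le h1).trans ?_
  have h2 : (1 - ‖w‖)⁻¹ ≤ 2 := by
    rw [inv_le_comm₀ (by linarith) (by norm_num)]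
    linarith
  have hnn : (0:ℝ) ≤ ‖w‖ ^ 2 := by positivity
  nlinarith [mul_le_mul_of_nonneg_left h2 hnn]

lemma cube_bound {w : ℂ} (hw : ‖w‖ ≤ 1 / 2) :
    ‖Complex.log (1 + w) - w + w ^ 2 / 2‖ ≤ ‖w‖ ^ 3 := by
  have h1 : ‖w‖ < 1 := lt_of_le_of_lt hw (by norm_num)
  have h0 : Complex.logTaylor 3 w = w - w ^ 2 / 2 := by
    simp [Complex.logTaylor, Finset.sum_range_succ]
    ring
  have := Complex.norm_log_sub_logTaylor_le 2 h1
  rw [h0] at this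
  have h2 : (1 - ‖w‖)⁻¹ ≤ 2 := by
    rw [inv_le_comm₀ (by linarith) (by norm_num)]
    linarith
  have h3 : Complex.log (1 + w) - w + w ^ 2 / 2 = Complex.log (1 + w) - (w - w ^ 2 / 2) := by ring
  rw [h3]
  refine this.trans ?_
  have hnn : (0:ℝ) ≤ ‖w‖ ^ 3 := by positivity
  nlinarith [mul_le_mul_of_nonneg_left h2 hnn]



lemma summable_invsq : Summable (fun k : ℕ => 1 / ((k : ℝ) + 1) ^ 2) := by
  have h := Real.summable_one_div_nat_pow.mpr (one_lt_two)
  have := (summable_nat_add_iff (f := fun n : ℕ => 1 / (n : ℝ) ^ 2) 1).mpr h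
  refine this.congr fun k => ?_
  push_cast
  ring

lemma ev_small : ∀ᶠ k : ℕ in atTop, ‖zz l k‖ ≤ 1 / 2 := by
  obtain ⟨M, hM⟩ := exists_nat_ge (2 * ‖l‖)
  filter_upwards [eventually_ge_atTop M] with k hk
  rw [norm_zz]
  rw [div_le_iff₀ (by positivity)]
  have : (M : ℝ) ≤ (k : ℝ) := by exact_mod_cast hk
  linarith

lemma summable_hh : Summable (hh l) := by
  rw [← summable_norm_iff]
  refine Summable.of_norm_bounded_eventually (g := fun k => ‖l‖ ^ 2 * (1 / ((k : ℝ) + 1) ^ 2))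
    ((summable_invsq).mul_left _) ?_
  rw [Nat.cofinite_eq_atTop]
  filter_upwards [ev_small l] with k hk
  rw [norm_norm]
  calc ‖hh l k‖ ≤ ‖zz l k‖ ^ 2 := quad_bound hk
    _ = ‖l‖ ^ 2 * (1 / ((k : ℝ) + 1) ^ 2) := by rw [norm_zz]; field_simp

lemma summable_gg : Summable (gg l) := by
  rw [← summable_norm_iff]
  refine Summable.of_norm_bounded_eventually (g := fun k => ‖l‖ ^ 3 * (1 / ((k : ℝ) + 1) ^ 2))
    ((summable_invsq).mul_left _) ?_
  rw [Nat.cofinite_eq_atTop]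
  filter_upwards [ev_small l] with k hk
  rw [norm_norm, gg_eq, norm_mul]
  have h1 : ‖((k : ℂ) + 1)‖ = (k : ℝ) + 1 := by
    have : ((k : ℂ) + 1) = (((k : ℝ) + 1 : ℝ) : ℂ) := by push_cast; ring
    rw [this, Complex.norm_real, Real.norm_of_nonneg (by positivity)]
  rw [h1]
  calc ((k : ℝ) + 1) * ‖Complex.log (1 + zz l k) - zz l k + zz l k ^ 2 / 2‖
      ≤ ((k : ℝ) + 1) * ‖zz l k‖ ^ 3 := by
        gcongr
        exact cube_bound hk
    _ = ‖l‖ ^ 3 * (1 / ((k : ℝ) + 1) ^ 2) := by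
        rw [norm_zz]
        field_simp

def TT : ℂ := ∑' k, hh l k

def SS : ℂ := ∑' k, gg l k

def ff (k : ℕ) : ℂ := (1 + zz l k) ^ (k + 1) * Complex.exp (-l + l ^ 2 / (2 * ((k : ℂ) + 1)))

variable {l}

lemma exp_gg (hl : -1 < l.re) (k : ℕ) : Complex.exp (gg l k) = ff l k := by
  have : gg l k = ((k + 1 : ℕ) : ℂ) * Complex.log (1 + zz l k) + (-l + l ^ 2 / (2 * ((k : ℂ) + 1))) := by
    rw [gg]; push_cast; ring
  rw [this, Complex.exp_add, Complex.exp_nat_mul, Complex.exp_log (one_add_zz_ne hl k), ff]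

lemma hasProd_ff (hl : -1 < l.re) : HasProd (ff l) (Complex.exp (SS l)) := by
  have hgS : HasSum (gg l) (SS l) := (summable_gg l).hasSum
  have := (Complex.continuous_exp.tendsto (SS l)).comp hgS
  refine this.congr fun s => ?_
  simp only [Function.comp_apply, Complex.exp_sum]
  exact Finset.prod_congr rfl fun k _ => exp_gg hl k

lemma tprod_ff (hl : -1 < l.re) : (∏' k, ff l k) = Complex.exp (SS l) :=
  (hasProd_ff hl).tprod_eq


lemma hasSum_telescope {b : ℕ → ℝ} (hnn : ∀ k, 0 ≤ b k) (hmono : ∀ k, b (k + 1) ≤ b k)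
    (h0 : Tendsto b atTop (𝓝 0)) : HasSum (fun k => b k - b (k + 1)) (b 0) := by
  have hsum : Summable (fun k => b k - b (k + 1)) := by
    refine summable_of_sum_range_le (c := b 0) (fun n => by linarith [hmono n]) fun n => ?_
    rw [Finset.sum_range_sub']
    linarith [hnn n]
  have ht := hsum.hasSum
  have h2 : Tendsto (fun n => ∑ i ∈ range n, (b i - b (i + 1))) atTop (𝓝 (b 0)) := by
    simp_rw [Finset.sum_range_sub']
    simpa using tendsto_const_nhds.sub h0
  rwa [tendsto_nhds_unique ht.tendsto_sum_nat h2] at ht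

lemma tendsto_inv_add (c : ℝ) : Tendsto (fun k : ℕ => ((k : ℝ) + c)⁻¹) atTop (𝓝 0) :=
  tendsto_inv_atTop_zero.comp (tendsto_atTop_add_const_right _ c tendsto_natCast_atTop_atTop)

lemma hasSum_tail_dR (m : ℕ) (hm : 1 ≤ m) :
    HasSum (fun k : ℕ => (((k : ℝ) + m) * ((k : ℝ) + m + 1))⁻¹) ((m : ℝ)⁻¹) := by
  have hmR : (1 : ℝ) ≤ (m : ℝ) := by exact_mod_cast hm
  have key := hasSum_telescope (b := fun k => ((k : ℝ) + m)⁻¹)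
    (fun k => by positivity) (fun k => by
      apply inv_anti₀ (by positivity)
      push_cast; linarith)
    (tendsto_inv_add m)
  have : ∀ k : ℕ, ((k : ℝ) + m)⁻¹ - (((k + 1 : ℕ) : ℝ) + m)⁻¹
      = (((k : ℝ) + m) * ((k : ℝ) + m + 1))⁻¹ := by
    intro k
    have h1 : (0:ℝ) < (k : ℝ) + m := by linarith [Nat.cast_nonneg (α := ℝ) k]
    have h2 : (0:ℝ) < (k : ℝ) + m + 1 := by linarith
    push_cast
    field_simp
    ring_nf
  simp only [this] at key
  simpa using key

lemma hasSum_tail_dC (m : ℕ) :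
    HasSum (fun k : ℕ => ((((k + m : ℕ) : ℂ) + 1) * (((k + m : ℕ) : ℂ) + 2))⁻¹)
      (((m : ℂ) + 1)⁻¹) := by
  have key := (hasSum_tail_dR (m + 1) (Nat.le_add_left 1 m)).mapL Complex.ofRealCLM
  have e1 : (fun k : ℕ => Complex.ofRealCLM ((((k : ℝ) + ((m + 1 : ℕ) : ℝ)) * ((k : ℝ) + ((m + 1 : ℕ) : ℝ) + 1))⁻¹))
      = fun k : ℕ => ((((k + m : ℕ) : ℂ) + 1) * (((k + m : ℕ) : ℂ) + 2))⁻¹ := by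
    funext k
    simp only [Complex.ofRealCLM_apply]
    push_cast
    ring
  have e2 : (Complex.ofRealCLM ((((m + 1 : ℕ) : ℝ))⁻¹) : ℂ) = ((m : ℂ) + 1)⁻¹ := by
    simp only [Complex.ofRealCLM_apply]
    push_cast
    ring
  rw [e1, e2] at key
  exact key


lemma norm_nat_add (k : ℕ) (c : ℝ) (hc : 0 ≤ c) : ‖((k : ℂ) + (c : ℝ))‖ = (k : ℝ) + c := by
  have : ((k : ℂ) + (c : ℝ)) = (((k : ℝ) + c : ℝ) : ℂ) := by push_cast; ring
  rw [this, Complex.norm_real, Real.norm_of_nonneg (by positivity)]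

variable (l)

def ee (k : ℕ) : ℂ := hh l k + (l ^ 2 / 2) * ((((k : ℂ) + 1) * ((k : ℂ) + 2))⁻¹)

def C3 : ℝ := ‖l‖ ^ 3 + ‖l‖ ^ 2

lemma kc2 (k : ℕ) : ((k : ℂ) + 2) ≠ 0 := by
  have : ((k : ℂ) + 2) = ((k + 2 : ℕ) : ℂ) := by push_cast; ring
  rw [this]
  exact Nat.cast_ne_zero.mpr (by omega)

lemma ee_eq (k : ℕ) : ee l k = (Complex.log (1 + zz l k) - zz l k + (zz l k) ^ 2 / 2)
    - (l ^ 2 / 2) * ((((k : ℂ) + 1) ^ 2 * ((k : ℂ) + 2))⁻¹) := by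
  rw [ee, hh, zz]
  field_simp [kc1 k, kc2 k]
  ring

lemma ee_bound {k : ℕ} (hk : ‖zz l k‖ ≤ 1 / 2) : ‖ee l k‖ ≤ C3 l * (((k : ℝ) + 1) ^ 3)⁻¹ := by
  rw [ee_eq]
  refine (norm_sub_le _ _).trans ?_
  have h1 : ‖Complex.log (1 + zz l k) - zz l k + (zz l k) ^ 2 / 2‖ ≤ ‖l‖ ^ 3 * (((k : ℝ) + 1) ^ 3)⁻¹ := by
    refine (cube_bound hk).trans (le_of_eq ?_)
    rw [norm_zz]
    field_simp
  have h2 : ‖(l ^ 2 / 2) * ((((k : ℂ) + 1) ^ 2 * ((k : ℂ) + 2))⁻¹)‖ ≤ ‖l‖ ^ 2 * (((k : ℝ) + 1) ^ 3)⁻¹ := by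
    rw [norm_mul, norm_div, norm_pow, norm_inv, norm_mul, norm_pow]
    have e1 : ‖((k : ℂ) + 1)‖ = (k : ℝ) + 1 := by
      simpa using norm_nat_add k 1 zero_le_one
    have e2 : ‖((k : ℂ) + 2)‖ = (k : ℝ) + 2 := by
      simpa using norm_nat_add k 2 zero_le_two
    rw [e1, e2]
    have hp : (((k : ℝ) + 1) ^ 3) ≤ ((k : ℝ) + 1) ^ 2 * ((k : ℝ) + 2) := by
      nlinarith [Nat.cast_nonneg (α := ℝ) k]
    have hinv : (((k : ℝ) + 1) ^ 2 * ((k : ℝ) + 2))⁻¹ ≤ (((k : ℝ) + 1) ^ 3)⁻¹ :=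
      inv_anti₀ (by positivity) hp
    have hn2 : ‖(2 : ℂ)‖ = 2 := by norm_num
    rw [hn2]
    calc ‖l‖ ^ 2 / 2 * (((k : ℝ) + 1) ^ 2 * ((k : ℝ) + 2))⁻¹
        ≤ ‖l‖ ^ 2 / 2 * (((k : ℝ) + 1) ^ 3)⁻¹ := by gcongr
      _ ≤ ‖l‖ ^ 2 * (((k : ℝ) + 1) ^ 3)⁻¹ := by
          have : (0:ℝ) ≤ (((k : ℝ) + 1) ^ 3)⁻¹ := by positivity
          nlinarith [sq_nonneg ‖l‖]
  calc _ ≤ ‖l‖ ^ 3 * (((k : ℝ) + 1) ^ 3)⁻¹ + ‖l‖ ^ 2 * (((k : ℝ) + 1) ^ 3)⁻¹ := add_le_add h1 h2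
    _ = C3 l * (((k : ℝ) + 1) ^ 3)⁻¹ := by rw [C3]; ring

def Rtail (m : ℕ) : ℂ := ∑' k, hh l (k + m)

lemma summable_hh_shift (m : ℕ) : Summable (fun k => hh l (k + m)) :=
  (summable_nat_add_iff m).mpr (summable_hh l)

lemma summable_ee_shift (m : ℕ) : Summable (fun k => ee l (k + m)) := by
  have h2 := ((hasSum_tail_dC m).summable).mul_left (l ^ 2 / 2)
  exact (summable_hh_shift l m).add h2

lemma Rtail_eq (m : ℕ) :
    Rtail l m = (∑' k, ee l (k + m)) - (l ^ 2 / 2) * ((m : ℂ) + 1)⁻¹ := by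
  have hdm := (hasSum_tail_dC m).summable
  have heq : ∀ k : ℕ, hh l (k + m)
      = ee l (k + m) - (l ^ 2 / 2) * ((((k + m : ℕ) : ℂ) + 1) * (((k + m : ℕ) : ℂ) + 2))⁻¹ := by
    intro k
    rw [ee]
    ring
  rw [Rtail]
  calc (∑' k, hh l (k + m))
      = ∑' k, (ee l (k + m) - (l ^ 2 / 2) * ((((k + m : ℕ) : ℂ) + 1) * (((k + m : ℕ) : ℂ) + 2))⁻¹) := by
        exact tsum_congr heq
    _ = (∑' k, ee l (k + m)) - ∑' k, (l ^ 2 / 2) * ((((k + m : ℕ) : ℂ) + 1) * (((k + m : ℕ) : ℂ) + 2))⁻¹ :=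
        Summable.tsum_sub (summable_ee_shift l m) (hdm.mul_left _)
    _ = (∑' k, ee l (k + m)) - (l ^ 2 / 2) * ((m : ℂ) + 1)⁻¹ := by
        rw [tsum_mul_left, (hasSum_tail_dC m).tsum_eq]

lemma tendsto_mR : Tendsto (fun m : ℕ => (m : ℂ) * Rtail l m) atTop (𝓝 (-(l ^ 2) / 2)) := by
  obtain ⟨M, hM⟩ := eventually_atTop.mp (ev_small l)
  have h1 : Tendsto (fun m : ℕ => (m : ℂ) * ∑' k, ee l (k + m)) atTop (𝓝 0) := by
    apply squeeze_zero_norm' (a := fun m : ℕ => C3 l * ((m : ℝ) + 1)⁻¹)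
    · filter_upwards [eventually_ge_atTop (max M 1)] with m hm
      have hm1 : 1 ≤ m := le_trans (le_max_right M 1) hm
      have hmM : M ≤ m := le_trans (le_max_left M 1) hm
      have hm1R : (1 : ℝ) ≤ (m : ℝ) := by exact_mod_cast hm1
      have hnsum : Summable (fun k => ‖ee l (k + m)‖) := summable_norm_iff.mpr (summable_ee_shift l m)
      have hmaj : Summable (fun k : ℕ => C3 l * ((m : ℝ) + 1)⁻¹ * (((k : ℝ) + m) * ((k : ℝ) + m + 1))⁻¹) :=
        ((hasSum_tail_dR m hm1).summable).mul_left _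
      have hpt : ∀ k : ℕ, ‖ee l (k + m)‖ ≤ C3 l * ((m : ℝ) + 1)⁻¹ * (((k : ℝ) + m) * ((k : ℝ) + m + 1))⁻¹ := by
        intro k
        have hsm : ‖zz l (k + m)‖ ≤ 1 / 2 := hM (k + m) (le_trans hmM (Nat.le_add_left m k))
        refine (ee_bound l hsm).trans ?_
        have hj : (m : ℝ) ≤ ((k + m : ℕ) : ℝ) := by exact_mod_cast Nat.le_add_left m k
        have hC : 0 ≤ C3 l := by rw [C3]; positivity
        have hkm : ((k + m : ℕ) : ℝ) = (k : ℝ) + m := by push_cast; ring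
        rw [hkm] at hj ⊢
        have key : ((m : ℝ) + 1) * (((k : ℝ) + m) * ((k : ℝ) + m + 1)) ≤ (((k : ℝ) + m) + 1) ^ 3 := by
          have hx0 : (0:ℝ) ≤ (k : ℝ) + m := by positivity
          have hmx : ((m : ℝ) + 1) ≤ ((k : ℝ) + m) + 1 := by linarith [Nat.cast_nonneg (α := ℝ) k]
          calc ((m : ℝ) + 1) * (((k : ℝ) + m) * ((k : ℝ) + m + 1))
              ≤ (((k : ℝ) + m) + 1) * (((k : ℝ) + m) * ((k : ℝ) + m + 1)) :=
                mul_le_mul_of_nonneg_right hmx (by positivity)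
            _ = ((k : ℝ) + m) * (((k : ℝ) + m) + 1) ^ 2 := by ring
            _ ≤ (((k : ℝ) + m) + 1) * (((k : ℝ) + m) + 1) ^ 2 :=
                mul_le_mul_of_nonneg_right (by linarith) (by positivity)
            _ = (((k : ℝ) + m) + 1) ^ 3 := by ring
        have : ((((k : ℝ) + m) + 1) ^ 3)⁻¹ ≤ (((m : ℝ) + 1) * (((k : ℝ) + m) * ((k : ℝ) + m + 1)))⁻¹ :=
          inv_anti₀ (by positivity) key
        calc C3 l * ((((k : ℝ) + m) + 1) ^ 3)⁻¹
            ≤ C3 l * (((m : ℝ) + 1) * (((k : ℝ) + m) * ((k : ℝ) + m + 1)))⁻¹ := by gcongr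
          _ = C3 l * ((m : ℝ) + 1)⁻¹ * (((k : ℝ) + m) * ((k : ℝ) + m + 1))⁻¹ := by
              rw [mul_inv]; ring
      have step1 : ‖∑' k, ee l (k + m)‖ ≤ ∑' k, ‖ee l (k + m)‖ := norm_tsum_le_tsum_norm hnsum
      have step2 : (∑' k, ‖ee l (k + m)‖)
          ≤ ∑' k : ℕ, C3 l * ((m : ℝ) + 1)⁻¹ * (((k : ℝ) + m) * ((k : ℝ) + m + 1))⁻¹ :=
        Summable.tsum_le_tsum hpt hnsum hmaj
      have step3 : (∑' k : ℕ, C3 l * ((m : ℝ) + 1)⁻¹ * (((k : ℝ) + m) * ((k : ℝ) + m + 1))⁻¹)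
          = C3 l * ((m : ℝ) + 1)⁻¹ * (m : ℝ)⁻¹ := by
        rw [tsum_mul_left, (hasSum_tail_dR m hm1).tsum_eq]
      have hmne : (m : ℝ) ≠ 0 := by positivity
      rw [norm_mul, Complex.norm_natCast]
      calc (m : ℝ) * ‖∑' k, ee l (k + m)‖
          ≤ (m : ℝ) * (C3 l * ((m : ℝ) + 1)⁻¹ * (m : ℝ)⁻¹) := by
            have hC : 0 ≤ C3 l := by rw [C3]; positivity
            refine mul_le_mul_of_nonneg_left ?_ (by positivity)
            exact step1.trans (step2.trans_eq step3)
        _ = C3 l * ((m : ℝ) + 1)⁻¹ := by field_simp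
    · have := (tendsto_inv_add 1).const_mul (C3 l)
      simpa using this
  have h2 : Tendsto (fun m : ℕ => (l ^ 2 / 2) * ((m : ℂ) * ((m : ℂ) + 1)⁻¹)) atTop
      (𝓝 (l ^ 2 / 2)) := by
    have := (tendsto_natCast_div_add_atTop (1 : ℂ)).const_mul (l ^ 2 / 2)
    simp only [mul_one] at this
    refine this.congr fun m => ?_
    ring
  have := h1.sub h2
  rw [zero_sub] at this
  have heq : ∀ m : ℕ, (m : ℂ) * ∑' k, ee l (k + m) - (l ^ 2 / 2) * ((m : ℂ) * ((m : ℂ) + 1)⁻¹)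
      = (m : ℂ) * Rtail l m := by
    intro m
    rw [Rtail_eq]
    ring
  have hval : -(l ^ 2 / 2) = -(l ^ 2) / 2 := by ring
  rw [hval] at this
  exact this.congr heq


variable {l}

lemma one_add_zz_eq_exp (hl : -1 < l.re) (k : ℕ) :
    1 + zz l k = Complex.exp (hh l k + zz l k) := by
  rw [hh, sub_add_cancel]
  exact (Complex.exp_log (one_add_zz_ne hl k)).symm

lemma prod_one_add_zz (hl : -1 < l.re) (n : ℕ) :
    ∏ k ∈ range n, (1 + zz l k) = Complex.exp (∑ k ∈ range n, (hh l k + zz l k)) := by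
  rw [Complex.exp_sum]
  exact prod_congr rfl fun k _ => one_add_zz_eq_exp hl k

lemma prod_cast_factorial (m : ℕ) : (∏ x ∈ range m, ((x : ℂ) + 1)) = ((Nat.factorial m : ℕ) : ℂ) := by
  rw [← Finset.prod_range_add_one_eq_factorial]
  push_cast
  rfl

lemma gammaSeq_eq (hl : -1 < l.re) {n : ℕ} (hn : 1 ≤ n) :
    Complex.GammaSeq (1 + l) n = ((n : ℂ) / ((n : ℂ) + 1)) *
      Complex.exp (l * ((Real.log n : ℝ) : ℂ) - ∑ k ∈ range (n + 1), (hh l k + zz l k)) := by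
  have hnR : (0 : ℝ) < n := by exact_mod_cast hn
  have hnC : (n : ℂ) ≠ 0 := Nat.cast_ne_zero.mpr (by omega)
  have prodd : ∏ j ∈ range (n + 1), ((1 + l) + (j : ℂ))
      = ((Nat.factorial (n + 1) : ℕ) : ℂ) * Complex.exp (∑ k ∈ range (n + 1), (hh l k + zz l k)) := by
    have e1 : ∀ j ∈ range (n + 1), ((1 + l) + (j : ℂ)) = ((j : ℂ) + 1) * (1 + zz l j) := by
      intro j _
      rw [zz]
      field_simp [kc1 j]
      ring
    rw [Finset.prod_congr rfl e1, Finset.prod_mul_distrib, prod_cast_factorial,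
      prod_one_add_zz hl]
  have npow : (n : ℂ) ^ (1 + l) = (n : ℂ) * Complex.exp (l * ((Real.log n : ℝ) : ℂ)) := by
    rw [Complex.cpow_def_of_ne_zero hnC, ← Complex.natCast_log]
    have : ((Real.log n : ℝ) : ℂ) * (1 + l) = ((Real.log n : ℝ) : ℂ) + l * ((Real.log n : ℝ) : ℂ) := by ring
    rw [this, Complex.exp_add]
    congr 1
    rw [← Complex.ofReal_exp, Real.exp_log hnR]
    norm_cast
  rw [Complex.GammaSeq, prodd, npow]
  have hfac : ((Nat.factorial (n + 1) : ℕ) : ℂ) = ((n : ℂ) + 1) * ((Nat.factorial n : ℕ) : ℂ) := by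
    rw [Nat.factorial_succ]
    push_cast
    ring
  rw [hfac, Complex.exp_sub]
  have h1 : ((Nat.factorial n : ℕ) : ℂ) ≠ 0 := Nat.cast_ne_zero.mpr (Nat.factorial_ne_zero n)
  field_simp [h1, kc1 n, Complex.exp_ne_zero]

lemma harmonic_cast_real (n : ℕ) : ((harmonic n : ℚ) : ℝ) = ∑ k ∈ range n, ((k : ℝ) + 1)⁻¹ := by
  rw [harmonic]
  push_cast
  rfl

lemma tendsto_log_gap : Tendsto (fun n : ℕ => Real.log (n + 1) - Real.log n) atTop (𝓝 0) := by
  have h1 : Tendsto (fun n : ℕ => 1 + 1 / (n : ℝ)) atTop (𝓝 1) := by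
    have := tendsto_one_div_atTop_nhds_zero_nat.const_add (1 : ℝ)
    simpa using this
  have h2 := ((Real.continuousAt_log (by norm_num : (1 : ℝ) ≠ 0)).tendsto).comp h1
  rw [Real.log_one] at h2
  refine h2.congr' ?_
  filter_upwards [eventually_ge_atTop 1] with n hn
  have hnR : (0 : ℝ) < n := by exact_mod_cast hn
  simp only [Function.comp_apply]
  rw [show (1 : ℝ) + 1 / n = ((n : ℝ) + 1) / n by field_simp,
    Real.log_div (by positivity) (by positivity)]

lemma tendsto_log_sub_H : Tendsto (fun n : ℕ => Real.log n - ∑ k ∈ range (n + 1), ((k : ℝ) + 1)⁻¹)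
    atTop (𝓝 (-Real.eulerMascheroniConstant)) := by
  have hH1 : Tendsto (fun n : ℕ => (∑ k ∈ range (n + 1), ((k : ℝ) + 1)⁻¹) - Real.log ((n : ℝ) + 1))
      atTop (𝓝 Real.eulerMascheroniConstant) := by
    have := Real.tendsto_harmonic_sub_log.comp (tendsto_add_atTop_nat 1)
    refine this.congr fun n => ?_
    simp only [Function.comp_apply]
    rw [harmonic_cast_real]
    have e : ((n + 1 : ℕ) : ℝ) = (n : ℝ) + 1 := by push_cast; ring
    rw [e]
  have := (hH1.add tendsto_log_gap).neg
  rw [add_zero] at this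
  refine this.congr fun n => ?_
  ring

lemma gamma_eq (hl : -1 < l.re) :
    Complex.Gamma (1 + l)
      = Complex.exp (-(Real.eulerMascheroniConstant : ℂ) * l - TT l) := by
  refine tendsto_nhds_unique (Complex.GammaSeq_tendsto_Gamma (1 + l)) ?_
  have t1 : Tendsto (fun n : ℕ => (n : ℂ) / ((n : ℂ) + 1)) atTop (𝓝 1) :=
    tendsto_natCast_div_add_atTop (1 : ℂ)
  have tsumh : Tendsto (fun n : ℕ => ∑ k ∈ range (n + 1), hh l k) atTop (𝓝 (TT l)) :=
    ((summable_hh l).hasSum.tendsto_sum_nat).comp (tendsto_add_atTop_nat 1)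
  have tre : Tendsto (fun n : ℕ => l * (((Real.log n - ∑ k ∈ range (n + 1), ((k : ℝ) + 1)⁻¹ : ℝ)) : ℂ))
      atTop (𝓝 (l * ((-Real.eulerMascheroniConstant : ℝ) : ℂ))) :=
    ((Complex.continuous_ofReal.tendsto _).comp tendsto_log_sub_H).const_mul l
  have texp : Tendsto (fun n : ℕ =>
      Complex.exp (l * ((Real.log n : ℝ) : ℂ) - ∑ k ∈ range (n + 1), (hh l k + zz l k)))
      atTop (𝓝 (Complex.exp (-(Real.eulerMascheroniConstant : ℂ) * l - TT l))) := by
    have hcomb := tre.sub tsumh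
    have heq : ∀ n : ℕ, l * (((Real.log n - ∑ k ∈ range (n + 1), ((k : ℝ) + 1)⁻¹ : ℝ)) : ℂ)
        - ∑ k ∈ range (n + 1), hh l k
        = l * ((Real.log n : ℝ) : ℂ) - ∑ k ∈ range (n + 1), (hh l k + zz l k) := by
      intro n
      rw [Finset.sum_add_distrib]
      have hz : ∑ k ∈ range (n + 1), zz l k = l * ∑ k ∈ range (n + 1), ((k : ℂ) + 1)⁻¹ := by
        rw [Finset.mul_sum]
        exact Finset.sum_congr rfl fun k _ => by rw [zz]; field_simp
      have hcast : ((∑ k ∈ range (n + 1), ((k : ℝ) + 1)⁻¹ : ℝ) : ℂ)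
          = ∑ k ∈ range (n + 1), ((k : ℂ) + 1)⁻¹ := by
        push_cast
        rfl
      rw [hz]
      push_cast [hcast]
      ring
    have hval : l * ((-Real.eulerMascheroniConstant : ℝ) : ℂ) - TT l
        = -(Real.eulerMascheroniConstant : ℂ) * l - TT l := by
      push_cast
      ring
    rw [← hval]
    exact (Complex.continuous_exp.tendsto _).comp ((hcomb.congr heq).congr' (by rfl))
  have := t1.mul texp
  rw [one_mul] at this
  refine this.congr' ?_
  filter_upwards [eventually_ge_atTop 1] with n hn
  exact (gammaSeq_eq hl hn).symm

lemma gamma_arg_ne (hl : -1 < l.re) (n : ℕ) : ((n : ℂ) + 1 + l) ≠ 0 := by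
  intro H
  have := congrArg Complex.re H
  simp only [Complex.add_re, Complex.natCast_re, Complex.one_re, Complex.zero_re] at this
  have hn : (0 : ℝ) ≤ (n : ℝ) := Nat.cast_nonneg n
  linarith

lemma gamma_ratio (hl : -1 < l.re) (n : ℕ) :
    Complex.Gamma ((n : ℂ) + 1 + l) / Complex.Gamma ((n : ℂ) + 1)
      = Complex.Gamma (1 + l) * ∏ k ∈ range n, (1 + zz l k) := by
  induction n with
  | zero =>
    simp only [Nat.cast_zero, zero_add, prod_range_zero, mul_one, Complex.Gamma_one, div_one]
  | succ n ih =>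
    have e1 : (((n + 1 : ℕ) : ℂ)) + 1 + l = ((n : ℂ) + 1 + l) + 1 := by push_cast; ring
    have e2 : (((n + 1 : ℕ) : ℂ)) + 1 = ((n : ℂ) + 1) + 1 := by push_cast; ring
    rw [e1, e2, Complex.Gamma_add_one _ (gamma_arg_ne hl n), Complex.Gamma_add_one _ (kc1 n),
      mul_div_mul_comm, ih, prod_range_succ]
    have e3 : ((n : ℂ) + 1 + l) / ((n : ℂ) + 1) = 1 + zz l n := by
      rw [zz]
      field_simp [kc1 n]
    rw [e3]
    ring

lemma gamma_ratio_exp (hl : -1 < l.re) (n : ℕ) :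
    Complex.Gamma ((n : ℂ) + 1 + l) / Complex.Gamma ((n : ℂ) + 1)
      = Complex.exp (-(Real.eulerMascheroniConstant : ℂ) * l - TT l
          + ∑ k ∈ range n, (hh l k + zz l k)) := by
  rw [gamma_ratio hl n, gamma_eq hl, prod_one_add_zz hl, ← Complex.exp_add]


lemma digamma_nat (n : ℕ) :
    digamma ((n : ℝ) + 1) = -Real.eulerMascheroniConstant + ((harmonic n : ℚ) : ℝ) := by
  rw [digamma, Real.deriv_Gamma_nat n, Real.Gamma_nat_eq_factorial]
  have h : ((Nat.factorial n : ℕ) : ℝ) ≠ 0 := Nat.cast_ne_zero.mpr (Nat.factorial_ne_zero n)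
  field_simp

lemma digamma_sum (N : ℕ) : (∑ j ∈ Finset.Icc 1 N, digamma j)
    = -(N : ℝ) * Real.eulerMascheroniConstant + ∑ i ∈ range N, ((harmonic i : ℚ) : ℝ) := by
  rw [← Finset.Ico_add_one_right_eq_Icc, Finset.sum_Ico_eq_sum_range]
  simp only [Nat.succ_sub_one, Nat.add_sub_cancel]
  have e : ∀ i : ℕ, digamma ((1 + i : ℕ) : ℝ)
      = -Real.eulerMascheroniConstant + ((harmonic i : ℚ) : ℝ) := by
    intro i
    have e2 : ((1 + i : ℕ) : ℝ) = (i : ℝ) + 1 := by push_cast; ring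
    rw [e2, digamma_nat]
  rw [Finset.sum_congr rfl (fun i _ => e i), Finset.sum_add_distrib, Finset.sum_const, card_range,
    nsmul_eq_mul]
  ring

lemma double_sum (a : ℕ → ℂ) (N : ℕ) : ∑ n ∈ range N, ∑ k ∈ range n, a k
    = ∑ k ∈ range N, (((N : ℂ) - 1 - (k : ℂ)) * a k) := by
  induction N with
  | zero => simp
  | succ N ih =>
    rw [Finset.sum_range_succ, ih,
      Finset.sum_range_succ (f := fun k => ((((N + 1 : ℕ)) : ℂ) - 1 - (k : ℂ)) * a k)]
    have h1 : (((N + 1 : ℕ)) : ℂ) - 1 - (N : ℂ) = 0 := by push_cast; ring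
    rw [h1, zero_mul, add_zero, ← Finset.sum_add_distrib]
    refine Finset.sum_congr rfl fun k _ => ?_
    push_cast
    ring

lemma gamma_prod (hl : -1 < l.re) (N : ℕ) :
    (∏ j ∈ Finset.Icc 1 N, (Complex.Gamma ((j : ℂ) + l) / Complex.Gamma (j : ℂ)))
      = Complex.exp (∑ i ∈ range N, (-(Real.eulerMascheroniConstant : ℂ) * l - TT l
          + ∑ k ∈ range i, (hh l k + zz l k))) := by
  rw [← Finset.Ico_add_one_right_eq_Icc, Finset.prod_Ico_eq_prod_range]
  simp only [Nat.succ_sub_one, Nat.add_sub_cancel]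
  rw [Complex.exp_sum]
  refine Finset.prod_congr rfl fun i _ => ?_
  have e : ((1 + i : ℕ) : ℂ) = (i : ℂ) + 1 := by push_cast; ring
  rw [e, gamma_ratio_exp hl i]

lemma cpow_eq {N : ℕ} (hN : 1 ≤ N) :
    (N : ℂ) ^ (-(l ^ 2) / 2) = Complex.exp (-(l ^ 2) / 2 * ((Real.log N : ℝ) : ℂ)) := by
  rw [Complex.cpow_def_of_ne_zero (Nat.cast_ne_zero.mpr (by omega)), ← Complex.natCast_log,
    mul_comm]

lemma harmonic_cast_complex (n : ℕ) :
    (((harmonic n : ℚ) : ℝ) : ℂ) = ∑ k ∈ range n, ((k : ℂ) + 1)⁻¹ := by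
  rw [harmonic_cast_real]
  push_cast
  rfl

variable (l)

def EE (N : ℕ) : ℂ := -(l ^ 2) / 2 * ((Real.log N : ℝ) : ℂ) - (N : ℂ) * TT l
  + ∑ k ∈ range N, (((N : ℂ) - 1 - (k : ℂ)) * hh l k)

variable {l}

lemma expr_eq (hl : -1 < l.re) {N : ℕ} (hN : 1 ≤ N) :
    (N : ℂ) ^ (-(l ^ 2) / 2) *
        (∏ j ∈ Finset.Icc 1 N, (Complex.Gamma ((j : ℂ) + l) / Complex.Gamma (j : ℂ))) *
        Complex.exp (-l * ((∑ j ∈ Finset.Icc 1 N, digamma j : ℝ) : ℂ))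
      = Complex.exp (EE l N) := by
  rw [cpow_eq hN, gamma_prod hl N, digamma_sum N, ← Complex.exp_add, ← Complex.exp_add, EE]
  congr 1
  rw [Finset.sum_add_distrib, Finset.sum_const, card_range, nsmul_eq_mul,
    double_sum (fun k => hh l k + zz l k) N]
  have hcast : ((-(N : ℝ) * Real.eulerMascheroniConstant
        + ∑ i ∈ range N, ((harmonic i : ℚ) : ℝ) : ℝ) : ℂ)
      = -(N : ℂ) * (Real.eulerMascheroniConstant : ℂ)
        + ∑ k ∈ range N, (((N : ℂ) - 1 - (k : ℂ)) * ((k : ℂ) + 1)⁻¹) := by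
    push_cast
    rw [← double_sum (fun k => ((k : ℂ) + 1)⁻¹) N]
    congr 1
    exact Finset.sum_congr rfl fun i _ => by
      have := harmonic_cast_complex i
      push_cast at this ⊢
      rw [this]
  rw [hcast]
  have hsplit : ∑ k ∈ range N, (((N : ℂ) - 1 - (k : ℂ)) * (hh l k + zz l k))
      = (∑ k ∈ range N, (((N : ℂ) - 1 - (k : ℂ)) * hh l k))
        + l * ∑ k ∈ range N, (((N : ℂ) - 1 - (k : ℂ)) * ((k : ℂ) + 1)⁻¹) := by
    rw [Finset.mul_sum, ← Finset.sum_add_distrib]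
    refine Finset.sum_congr rfl fun k _ => ?_
    rw [zz]
    field_simp
  rw [hsplit]
  ring


lemma EE_decomp (N : ℕ) : EE l N = -(∑ k ∈ range N, gg l k)
    + (l ^ 2 / 2) * ((∑ k ∈ range N, ((k : ℂ) + 1)⁻¹) - ((Real.log N : ℝ) : ℂ))
    - (N : ℂ) * (TT l - ∑ k ∈ range N, hh l k) := by
  have hterm : ∀ k ∈ range N, ((N : ℂ) - 1 - (k : ℂ)) * hh l k
      = -gg l k + (l ^ 2 / 2) * ((k : ℂ) + 1)⁻¹ + (N : ℂ) * hh l k := by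
    intro k _
    rw [hh, gg, zz]
    field_simp [kc1 k]
    ring
  rw [EE, Finset.sum_congr rfl hterm, Finset.sum_add_distrib, Finset.sum_add_distrib,
    Finset.sum_neg_distrib, ← Finset.mul_sum, ← Finset.mul_sum]
  ring

lemma tendsto_EE : Tendsto (fun N : ℕ => EE l N) atTop
    (𝓝 (-(SS l) + (l ^ 2 / 2) * ((Real.eulerMascheroniConstant : ℝ) : ℂ) + l ^ 2 / 2)) := by
  have t1 : Tendsto (fun N : ℕ => -(∑ k ∈ range N, gg l k)) atTop (𝓝 (-(SS l))) :=
    ((summable_gg l).hasSum.tendsto_sum_nat).neg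
  have t2 : Tendsto (fun N : ℕ => (l ^ 2 / 2) *
      (((((harmonic N : ℚ) : ℝ) - Real.log N : ℝ)) : ℂ)) atTop
      (𝓝 ((l ^ 2 / 2) * ((Real.eulerMascheroniConstant : ℝ) : ℂ))) :=
    ((Complex.continuous_ofReal.tendsto _).comp Real.tendsto_harmonic_sub_log).const_mul _
  have hRt : ∀ N : ℕ, TT l - ∑ k ∈ range N, hh l k = Rtail l N := by
    intro N
    have h := (summable_hh l).sum_add_tsum_nat_add N
    rw [Rtail]
    exact (eq_sub_of_add_eq' h).symm
  have t3 : Tendsto (fun N : ℕ => (N : ℂ) * (TT l - ∑ k ∈ range N, hh l k)) atTop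
      (𝓝 (-(l ^ 2) / 2)) :=
    (tendsto_mR l).congr fun N => by rw [hRt N]
  have tEE := (t1.add t2).sub t3
  have hval : -(SS l) + (l ^ 2 / 2) * ((Real.eulerMascheroniConstant : ℝ) : ℂ) + l ^ 2 / 2
      = (-(SS l) + (l ^ 2 / 2) * ((Real.eulerMascheroniConstant : ℝ) : ℂ)) - (-(l ^ 2) / 2) := by
    ring
  rw [hval]
  refine tEE.congr fun N => ?_
  rw [EE_decomp]
  congr 2
  rw [Complex.ofReal_sub, harmonic_cast_complex]

lemma target_eq (hl : -1 < l.re) :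
    (((Real.sqrt (Real.exp 1 / (2 * Real.pi)) : ℝ) : ℂ) ^ l * barnesG (1 + l))⁻¹
      = Complex.exp (-(SS l) + (l ^ 2 / 2) * ((Real.eulerMascheroniConstant : ℝ) : ℂ)
          + l ^ 2 / 2) := by
  have h2pi : (0 : ℝ) < 2 * Real.pi := by positivity
  have hsq : (0 : ℝ) < Real.sqrt (Real.exp 1 / (2 * Real.pi)) :=
    Real.sqrt_pos.mpr (by positivity)
  have hb : barnesG (1 + l) = Complex.exp ((l / 2) * ((Real.log (2 * Real.pi) : ℝ) : ℂ)
      - ((1 + (Real.eulerMascheroniConstant : ℂ)) * l ^ 2 + l) / 2 + SS l) := by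
    rw [barnesG]
    have e1 : (1 : ℂ) + l - 1 = l := by ring
    rw [e1]
    have e2 : (∏' (n : ℕ), ((1 + l / ((n : ℂ) + 1)) ^ (n + 1)
        * Complex.exp (-l + l ^ 2 / (2 * ((n : ℂ) + 1))))) = Complex.exp (SS l) := by
      rw [← tprod_ff hl]
      exact congrArg tprod (funext fun k => by rw [ff, zz])
    rw [e2]
    have hc : (2 * Real.pi : ℂ) = ((2 * Real.pi : ℝ) : ℂ) := by push_cast; rfl
    have e3 : (2 * Real.pi : ℂ) ^ (l / 2)
        = Complex.exp ((l / 2) * ((Real.log (2 * Real.pi) : ℝ) : ℂ)) := by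
      have hne : (2 * Real.pi : ℂ) ≠ 0 := by
        rw [hc]
        exact Complex.ofReal_ne_zero.mpr h2pi.ne'
      rw [Complex.cpow_def_of_ne_zero hne]
      congr 1
      rw [hc, ← Complex.ofReal_log h2pi.le]
      ring
    rw [e3, ← Complex.exp_add, ← Complex.exp_add]
    congr 1
  have hs : ((Real.sqrt (Real.exp 1 / (2 * Real.pi)) : ℝ) : ℂ) ^ l
      = Complex.exp ((((1 - Real.log (2 * Real.pi)) / 2 : ℝ) : ℂ) * l) := by
    rw [Complex.cpow_def_of_ne_zero (Complex.ofReal_ne_zero.mpr hsq.ne')]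
    congr 1
    rw [← Complex.ofReal_log (Real.sqrt_nonneg _),
      Real.log_sqrt (by positivity), Real.log_div (Real.exp_ne_zero 1) h2pi.ne', Real.log_exp]
  rw [hs, hb, ← Complex.exp_add, ← Complex.exp_neg]
  congr 1
  push_cast
  ring

end
end Stmt5


open Stmt5 in
/-- For every complex `λ` with `Re λ > −1`,
`lim_{N→∞} N^{−λ²/2} · (∏_{j=1}^N Γ(j+λ)/Γ(j)) · exp(−λ ∑_{j=1}^N ψ(j))
  = (A^λ · G(1+λ))⁻¹`, where `A = √(e/(2π))` and `ψ = Γ'/Γ` is the digamma function. -/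
theorem stmt5 (l : ℂ) (hl : -1 < l.re) :
    Tendsto (fun N : ℕ =>
        (N : ℂ) ^ (-(l ^ 2) / 2) *
          (∏ j ∈ Finset.Icc 1 N, Complex.Gamma (j + l) / Complex.Gamma j) *
          Complex.exp (-l * ((∑ j ∈ Finset.Icc 1 N, digamma j : ℝ) : ℂ)))
      atTop
      (𝓝 (((Real.sqrt (Real.exp 1 / (2 * Real.pi)) : ℂ) ^ l * barnesG (1 + l))⁻¹)) := by
  have texp := (Complex.continuous_exp.tendsto _).comp (tendsto_EE (l := l))
  rw [target_eq hl]
  refine Filter.Tendsto.congr' ?_ texp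
  filter_upwards [eventually_ge_atTop 1] with N hN
  simp only [Function.comp_apply]
  exact (expr_eq hl hN).symm
end

section
/- lim_{N→∞} [ ∫_0^∞ (u e^{−u} / (1 − e^{−u})²) (1 − e^{−Nu}) du − log N ] = 1 + γ, where γ is the Euler–Mascheroni constant. Equivalently, ∫_0^∞ (u e^{−u} / (1 − e^{−u})²) (1 − e^{−Nu}) du = log N + (1+γ) + o(1) as N → ∞. -/
open Filter Topology MeasureTheory Set Real

lemma tele {c : ℝ} (hc : 0 < c) :
    HasSum (fun k : ℕ => 1 / (c + k) - 1 / (c + k + 1)) (1 / c) := by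
  have hnn : ∀ k : ℕ, 0 ≤ 1 / (c + k) - 1 / (c + k + 1) := by
    intro k
    have h1 : (0:ℝ) < c + k := by positivity
    have h2 : (0:ℝ) < c + k + 1 := by positivity
    rw [sub_nonneg]
    apply one_div_le_one_div_of_le h1
    linarith
  rw [hasSum_iff_tendsto_nat_of_nonneg hnn]
  have key : ∀ n : ℕ, ∑ i ∈ Finset.range n, (1 / (c + i) - 1 / (c + i + 1))
      = 1 / c - 1 / (c + n) := by
    intro n
    have h := Finset.sum_range_sub' (fun i : ℕ => 1 / (c + i)) n
    simp only [Nat.cast_add, Nat.cast_one, Nat.cast_zero, add_zero] at h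
    rw [← h]
    apply Finset.sum_congr rfl
    intro i _
    ring_nf
  simp_rw [key]
  have h0 : Tendsto (fun n : ℕ => 1 / (c + n)) atTop (𝓝 0) := by
    have : Tendsto (fun n : ℕ => c + (n:ℝ)) atTop atTop :=
      tendsto_atTop_add_const_left _ _ tendsto_natCast_atTop_atTop
    simpa [Pi.inv_def] using this.inv_tendsto_atTop
  simpa using (tendsto_const_nhds (x := 1/c)).sub h0

lemma integ1 {r : ℝ} (hr : 0 < r) :
    IntegrableOn (fun u : ℝ => u * Real.exp (-(r * u))) (Ioi 0) := by
  have := integrableOn_rpow_mul_exp_neg_mul_rpow (p := 1) (s := 1) (b := r) (by norm_num) one_pos hr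
  refine this.congr_fun (fun x hx => ?_) measurableSet_Ioi
  simp [Real.rpow_one, mul_comm]

lemma int1 {r : ℝ} (hr : 0 < r) :
    ∫ u in Ioi (0:ℝ), u * Real.exp (-(r * u)) = 1 / r ^ 2 := by
  have h := Real.integral_rpow_mul_exp_neg_mul_Ioi (a := 2) (r := r) (by norm_num) hr
  rw [Real.Gamma_two, mul_one] at h
  have h2 : ((1:ℝ) / r) ^ (2:ℝ) = 1 / r ^ 2 := by
    rw [Real.rpow_two]; ring
  rw [← h2, ← h]
  refine setIntegral_congr_fun measurableSet_Ioi (fun x hx => ?_)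
  rw [show (2:ℝ) - 1 = 1 by norm_num, Real.rpow_one]

-- pointwise series identity for u > 0
lemma ptwise (N : ℕ) {u : ℝ} (hu : 0 < u) :
    u * Real.exp (-u) / (1 - Real.exp (-u)) ^ 2 * (1 - Real.exp (-(N * u)))
      = ∑' k : ℕ, ((k:ℝ)+1) * (u * Real.exp (-(((k:ℝ)+1) * u))) * (1 - Real.exp (-(N * u))) := by
  set r := Real.exp (-u) with hr
  have hr0 : 0 < r := Real.exp_pos _
  have hr1 : r < 1 := by
    rw [hr, Real.exp_lt_one_iff]; linarith
  have hnorm : ‖r‖ < 1 := by rw [Real.norm_eq_abs, abs_of_pos hr0]; exact hr1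
  have hsum := hasSum_coe_mul_geometric_of_norm_lt_one (r := r) hnorm
  have hpow : ∀ k : ℕ, Real.exp (-(((k:ℝ)+1) * u)) = r ^ (k+1) := by
    intro k
    rw [hr, ← Real.exp_nat_mul]
    congr 1
    push_cast
    ring
  have h2 := (hsum.mul_right (u * (1 - Real.exp (-(N * u))))).tsum_eq
  have h3 : (∑' k : ℕ, ((k:ℝ) * r ^ k) * (u * (1 - Real.exp (-(N * u)))))
      = ∑' k : ℕ, ((k:ℝ)+1) * (u * Real.exp (-(((k:ℝ)+1) * u))) * (1 - Real.exp (-(N * u))) := by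
    rw [Summable.tsum_eq_zero_add]
    · simp only [Nat.cast_zero, zero_mul, pow_zero, zero_add]
      congr 1
      ext k
      rw [hpow k]
      push_cast
      ring
    · exact (hsum.mul_right _).summable
  rw [← h3, h2]
  field_simp

lemma intF (N : ℕ) (hN : 1 ≤ N) (k : ℕ) :
    ∫ u in Ioi (0:ℝ), ((k:ℝ)+1) * (u * Real.exp (-(((k:ℝ)+1) * u))) * (1 - Real.exp (-(N * u)))
      = 1/((k:ℝ)+1) - ((k:ℝ)+1)/((k:ℝ)+1+N)^2 := by
  have hk : (0:ℝ) < (k:ℝ)+1 := by positivity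
  have hkN : (0:ℝ) < (k:ℝ)+1+N := by positivity
  have hcong : ∀ u ∈ Ioi (0:ℝ),
      ((k:ℝ)+1) * (u * Real.exp (-(((k:ℝ)+1) * u))) * (1 - Real.exp (-(N * u)))
      = ((k:ℝ)+1) * (u * Real.exp (-((((k:ℝ)+1)) * u)) - u * Real.exp (-((((k:ℝ)+1+N)) * u))) := by
    intro u _
    rw [show -(((k:ℝ)+1+N) * u) = -(((k:ℝ)+1) * u) + -(N * u) by ring, Real.exp_add]
    ring
  rw [setIntegral_congr_fun measurableSet_Ioi hcong, integral_const_mul,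
    integral_sub (integ1 hk) (integ1 hkN), int1 hk, int1 hkN]
  field_simp

-- summability of the base series
lemma sqsum : Summable (fun k : ℕ => 1 / ((k:ℝ)+1)^2) := by
  have := Real.summable_one_div_nat_pow.mpr (le_refl 2)
  have h2 := (summable_nat_add_iff 1).mpr this
  refine h2.congr fun k => ?_
  push_cast
  ring_nf

lemma c_nonneg (N : ℕ) (k : ℕ) : 0 ≤ 1/((k:ℝ)+1) - ((k:ℝ)+1)/((k:ℝ)+1+N)^2 := by
  have hk : (0:ℝ) < (k:ℝ)+1 := by positivity
  have hkN : (0:ℝ) < (k:ℝ)+1+N := by positivity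
  rw [sub_nonneg, div_le_div_iff₀ (by positivity) hk]
  nlinarith [Nat.cast_nonneg (α := ℝ) N, sq_nonneg ((N:ℝ))]

lemma c_le (N : ℕ) (k : ℕ) : 1/((k:ℝ)+1) - ((k:ℝ)+1)/((k:ℝ)+1+N)^2 ≤ 2*N/((k:ℝ)+1)^2 := by
  have hk : (0:ℝ) < (k:ℝ)+1 := by positivity
  have hkN : (0:ℝ) < (k:ℝ)+1+N := by positivity
  have hN0 : (0:ℝ) ≤ N := Nat.cast_nonneg N
  rw [div_sub_div _ _ (ne_of_gt hk) (by positivity), div_le_div_iff₀ (by positivity) (by positivity)]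
  nlinarith [sq_nonneg ((N:ℝ)), sq_nonneg ((k:ℝ)+1), mul_nonneg hN0 (sq_nonneg ((k:ℝ)+1)),
    mul_nonneg (mul_nonneg hN0 hN0) hN0, mul_nonneg (mul_nonneg hN0 hN0) hk.le]

lemma c_summable (N : ℕ) : Summable (fun k : ℕ => 1/((k:ℝ)+1) - ((k:ℝ)+1)/((k:ℝ)+1+N)^2) := by
  have h : Summable (fun k : ℕ => (2*(N:ℝ)) * (1/((k:ℝ)+1)^2)) := sqsum.mul_left _
  refine Summable.of_nonneg_of_le (c_nonneg N)
    (fun k => le_trans (c_le N k) (le_of_eq (by ring))) h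

lemma integF (N : ℕ) (k : ℕ) :
    IntegrableOn (fun u : ℝ =>
      ((k:ℝ)+1) * (u * Real.exp (-(((k:ℝ)+1) * u))) * (1 - Real.exp (-(N * u)))) (Ioi 0) := by
  have hk : (0:ℝ) < (k:ℝ)+1 := by positivity
  have hkN : (0:ℝ) < (k:ℝ)+1+N := by positivity
  have h : IntegrableOn (fun u : ℝ =>
      ((k:ℝ)+1) * (u * Real.exp (-(((k:ℝ)+1) * u)) - u * Real.exp (-(((k:ℝ)+1+N) * u)))) (Ioi 0) :=
    ((integ1 hk).sub (integ1 hkN)).const_mul _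
  refine h.congr_fun (fun u hu => ?_) measurableSet_Ioi
  beta_reduce
  rw [show -(((k:ℝ)+1+N) * u) = -(((k:ℝ)+1) * u) + -(N * u) by ring, Real.exp_add]
  ring

lemma swap (N : ℕ) (hN : 1 ≤ N) :
    ∫ u in Ioi (0:ℝ), u * Real.exp (-u) / (1 - Real.exp (-u)) ^ 2 * (1 - Real.exp (-(N * u)))
      = ∑' k : ℕ, (1/((k:ℝ)+1) - ((k:ℝ)+1)/((k:ℝ)+1+N)^2) := by
  have hmeas : ∀ k : ℕ, AEStronglyMeasurable (fun u : ℝ =>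
      ((k:ℝ)+1) * (u * Real.exp (-(((k:ℝ)+1) * u))) * (1 - Real.exp (-(N * u))))
      (volume.restrict (Ioi 0)) := by
    intro k
    apply Continuous.aestronglyMeasurable
    continuity
  have hnn : ∀ k : ℕ, 0 ≤ᵐ[volume.restrict (Ioi (0:ℝ))] (fun u : ℝ =>
      ((k:ℝ)+1) * (u * Real.exp (-(((k:ℝ)+1) * u))) * (1 - Real.exp (-(N * u)))) := by
    intro k
    rw [EventuallyLE, ae_restrict_iff' measurableSet_Ioi]
    filter_upwards with u hu
    have h1 : Real.exp (-(N * u)) ≤ 1 := by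
      rw [Real.exp_le_one_iff]
      have hu' : 0 < u := hu
      have : (0:ℝ) ≤ (N:ℝ) * u := mul_nonneg (Nat.cast_nonneg N) hu'.le
      linarith
    have h2 := Real.exp_pos (-(((k:ℝ)+1) * u))
    have hu' : 0 < u := hu
    simp only [Pi.zero_apply]
    apply mul_nonneg (mul_nonneg (by positivity) (by positivity))
    linarith
  have hlint : ∀ k : ℕ, ∫⁻ u in Ioi (0:ℝ),
      ‖((k:ℝ)+1) * (u * Real.exp (-(((k:ℝ)+1) * u))) * (1 - Real.exp (-(N * u)))‖₊
      = ENNReal.ofReal (1/((k:ℝ)+1) - ((k:ℝ)+1)/((k:ℝ)+1+N)^2) := by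
    intro k
    rw [← intF N hN k, ofReal_integral_eq_lintegral_ofReal (integF N k) (hnn k)]
    apply lintegral_congr_ae
    filter_upwards [hnn k] with u hu
    rw [← Real.enorm_eq_ofReal hu]
    rfl
  have hfin : (∑' k : ℕ, ∫⁻ u in Ioi (0:ℝ),
      ‖((k:ℝ)+1) * (u * Real.exp (-(((k:ℝ)+1) * u))) * (1 - Real.exp (-(N * u)))‖₊) ≠ ⊤ := by
    simp_rw [hlint]
    rw [← ENNReal.ofReal_tsum_of_nonneg (c_nonneg N) (c_summable N)]
    exact ENNReal.ofReal_ne_top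
  have := integral_tsum hmeas hfin
  rw [setIntegral_congr_fun measurableSet_Ioi (fun u hu => ptwise N hu), this]
  congr 1
  ext k
  exact intF N hN k

lemma S2_le (N : ℕ) (hN : 1 ≤ N) (k : ℕ) :
    1/((N:ℝ)+1+k)^2 ≤ 1 / ((N:ℝ) + k) - 1 / ((N:ℝ) + k + 1) := by
  have h1 : (0:ℝ) < (N:ℝ) + k := by
    have : (1:ℝ) ≤ (N:ℝ) := by exact_mod_cast hN
    positivity
  have h2 : (0:ℝ) < (N:ℝ) + k + 1 := by positivity
  have h3 : 1 / ((N:ℝ) + k) - 1 / ((N:ℝ) + k + 1) = 1 / (((N:ℝ)+k) * ((N:ℝ)+k+1)) := by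
    field_simp
    ring
  rw [h3]
  apply one_div_le_one_div_of_le (by positivity)
  nlinarith
lemma S2_ge (N : ℕ) (k : ℕ) :
    1 / ((N:ℝ)+1 + k) - 1 / ((N:ℝ)+1 + k + 1) ≤ 1/((N:ℝ)+1+k)^2 := by
  have h1 : (0:ℝ) < (N:ℝ) + 1 + k := by positivity
  have h3 : 1 / ((N:ℝ)+1 + k) - 1 / ((N:ℝ)+1 + k + 1) = 1 / (((N:ℝ)+1+k) * ((N:ℝ)+1+k+1)) := by
    field_simp
    ring
  rw [h3]
  apply one_div_le_one_div_of_le (by positivity)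
  nlinarith

lemma S2_summable (N : ℕ) (hN : 1 ≤ N) : Summable (fun k : ℕ => 1/((N:ℝ)+1+k)^2) := by
  have hN0 : (0:ℝ) < N := by exact_mod_cast hN
  exact Summable.of_nonneg_of_le (fun k => by positivity) (S2_le N hN) (tele hN0).summable

lemma S2_bounds (N : ℕ) (hN : 1 ≤ N) :
    1/((N:ℝ)+1) ≤ (∑' k : ℕ, 1/((N:ℝ)+1+k)^2) ∧ (∑' k : ℕ, 1/((N:ℝ)+1+k)^2) ≤ 1/(N:ℝ) := by
  have hN0 : (0:ℝ) < N := by exact_mod_cast hN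
  have hN1 : (0:ℝ) < (N:ℝ)+1 := by positivity
  constructor
  · rw [← (tele hN1).tsum_eq]
    exact Summable.tsum_le_tsum (S2_ge N) (tele hN1).summable (S2_summable N hN)
  · rw [← (tele hN0).tsum_eq]
    exact Summable.tsum_le_tsum (S2_le N hN) (S2_summable N hN) (tele hN0).summable

lemma a_repr (N : ℕ) (k : ℕ) :
    1/((k:ℝ)+1) - 1/((k:ℝ)+1+N)
      = ∑ j ∈ Finset.range N, (1 / (((j:ℝ)+1) + k) - 1 / (((j:ℝ)+1) + k + 1)) := by
  have h := Finset.sum_range_sub' (fun j : ℕ => 1 / ((k:ℝ) + 1 + j)) N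
  simp only [Nat.cast_zero, add_zero] at h
  rw [show ∑ j ∈ Finset.range N, (1 / (((j:ℝ)+1) + k) - 1 / (((j:ℝ)+1) + k + 1))
      = ∑ j ∈ Finset.range N, ((fun j : ℕ => 1 / ((k:ℝ) + 1 + j)) j - (fun j : ℕ => 1 / ((k:ℝ) + 1 + j)) (j+1))
      from Finset.sum_congr rfl (fun j _ => by push_cast; ring_nf), h]

lemma a_summable (N : ℕ) : Summable (fun k : ℕ => 1/((k:ℝ)+1) - 1/((k:ℝ)+1+N)) := by
  have : Summable (fun k : ℕ => ∑ j ∈ Finset.range N,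
      (1 / (((j:ℝ)+1) + k) - 1 / (((j:ℝ)+1) + k + 1))) := by
    apply summable_sum
    intro j _
    exact (tele (by positivity : (0:ℝ) < (j:ℝ)+1)).summable
  exact this.congr (fun k => (a_repr N k).symm)

lemma a_tsum (N : ℕ) :
    ∑' k : ℕ, (1/((k:ℝ)+1) - 1/((k:ℝ)+1+N)) = (harmonic N : ℝ) := by
  rw [tsum_congr (a_repr N), Summable.tsum_finsetSum
    (f := fun (j : ℕ) (k : ℕ) => 1 / (((j:ℝ)+1) + k) - 1 / (((j:ℝ)+1) + k + 1))
    (s := Finset.range N)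
    (fun j _ => (tele (by positivity : (0:ℝ) < (j:ℝ)+1)).summable)]
  have : ∀ j ∈ Finset.range N, (∑' k : ℕ, (1 / (((j:ℝ)+1) + k) - 1 / (((j:ℝ)+1) + k + 1)))
      = 1/((j:ℝ)+1) := fun j _ => (tele (by positivity : (0:ℝ) < (j:ℝ)+1)).tsum_eq
  rw [Finset.sum_congr rfl this]
  rw [harmonic]
  push_cast
  simp [one_div]

lemma c_split (N : ℕ) (k : ℕ) :
    1/((k:ℝ)+1) - ((k:ℝ)+1)/((k:ℝ)+1+N)^2
      = (1/((k:ℝ)+1) - 1/((k:ℝ)+1+N)) + (N:ℝ) * (1/((N:ℝ)+1+k)^2) := by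
  have hk : ((k:ℝ)+1) ≠ 0 := by positivity
  have hkN : ((k:ℝ)+1+N) ≠ 0 := by positivity
  have hNk : ((N:ℝ)+1+k) ≠ 0 := by positivity
  field_simp
  ring

lemma tsum_eval (N : ℕ) (hN : 1 ≤ N) :
    ∑' k : ℕ, (1/((k:ℝ)+1) - ((k:ℝ)+1)/((k:ℝ)+1+N)^2)
      = (harmonic N : ℝ) + (N:ℝ) * ∑' k : ℕ, 1/((N:ℝ)+1+k)^2 := by
  rw [tsum_congr (c_split N), Summable.tsum_add (a_summable N) ((S2_summable N hN).mul_left _),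
    a_tsum N, tsum_mul_left]

/-- `lim_{N→∞} [∫_0^∞ (u e^{−u}/(1 − e^{−u})²)(1 − e^{−Nu}) du − log N] = 1 + γ`,
where `γ` is the Euler–Mascheroni constant. -/
theorem stmt11 :
    Tendsto (fun N : ℕ =>
        (∫ u in Set.Ioi (0 : ℝ),
          u * Real.exp (-u) / (1 - Real.exp (-u)) ^ 2 * (1 - Real.exp (-(N * u)))) -
          Real.log N)
      atTop (𝓝 (1 + Real.eulerMascheroniConstant)) := by
  have h1 : Tendsto (fun N : ℕ => (harmonic N : ℝ) - Real.log N) atTop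
      (𝓝 Real.eulerMascheroniConstant) := Real.tendsto_harmonic_sub_log
  have h2 : Tendsto (fun N : ℕ => (N:ℝ) * ∑' k : ℕ, 1/((N:ℝ)+1+k)^2) atTop (𝓝 1) := by
    apply tendsto_of_tendsto_of_tendsto_of_le_of_le'
      (g := fun N : ℕ => (N:ℝ)/((N:ℝ)+1)) (h := fun _ : ℕ => (1:ℝ))
    · exact_mod_cast tendsto_natCast_div_add_atTop (1:ℝ)
    · exact tendsto_const_nhds
    · filter_upwards [eventually_ge_atTop 1] with N hN
      have hN0 : (0:ℝ) < N := by exact_mod_cast hN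
      have := (S2_bounds N hN).1
      calc (N:ℝ)/((N:ℝ)+1) = (N:ℝ) * (1/((N:ℝ)+1)) := by ring
        _ ≤ (N:ℝ) * ∑' k : ℕ, 1/((N:ℝ)+1+k)^2 := by
            apply mul_le_mul_of_nonneg_left this hN0.le
    · filter_upwards [eventually_ge_atTop 1] with N hN
      have hN0 : (0:ℝ) < N := by exact_mod_cast hN
      have := (S2_bounds N hN).2
      calc (N:ℝ) * ∑' k : ℕ, 1/((N:ℝ)+1+k)^2 ≤ (N:ℝ) * (1/(N:ℝ)) :=
            mul_le_mul_of_nonneg_left this hN0.le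
        _ = 1 := by field_simp
  have h3 := h2.add h1
  rw [show (1:ℝ) + Real.eulerMascheroniConstant = 1 + Real.eulerMascheroniConstant from rfl]
  apply h3.congr'
  filter_upwards [eventually_ge_atTop 1] with N hN
  rw [swap N hN, tsum_eval N hN]
  ring
end

section
/- The function q(u) = (3/π²) · ((u/2)/sinh(u/2))² is a probability density on (0,∞), and for every complex s with Re(s) > −1, ∫_0^∞ u^s q(u) du = (3/π²) Γ(s+3) ζ(s+2), where ζ is the Riemann zeta function. Equivalently, the random variable Q with density q satisfies E[Q^s] = (3/π²) Γ(s+3) ζ(s+2). -/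
open MeasureTheory


open Real Set Complex

theorem key (s : ℂ) (hs : -1 < s.re) :
    (∫ u in Set.Ioi (0 : ℝ),
        (u : ℂ) ^ s * (3 / Real.pi ^ 2 * (u / 2 / Real.sinh (u / 2)) ^ 2 : ℝ)) =
      3 / (Real.pi : ℂ) ^ 2 * Complex.Gamma (s + 3) * riemannZeta (s + 2) := by
  set F : ℝ → ℂ := fun t ↦ (rexp (-t) : ℂ) / (1 - rexp (-t)) ^ 2 with hFdef
  have hs3 : 0 < (s + 3).re := by simp [Complex.add_re]; linarith
  have hp : ∀ n : ℕ, ((n : ℂ) = 0 ∨ 0 < ((n : ℕ) : ℝ)) := by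
    intro n
    rcases Nat.eq_zero_or_pos n with h | h
    · exact Or.inl (by simp [h])
    · exact Or.inr (by positivity)
  have hF : ∀ t ∈ Ioi (0:ℝ), HasSum (fun n : ℕ ↦ (n : ℂ) * rexp (-(n:ℝ) * t)) (F t) := by
    intro t ht
    have hlt : ‖((rexp (-t)) : ℂ)‖ < 1 := by
      simp only [Complex.norm_real, Real.norm_eq_abs, abs_of_pos (Real.exp_pos _)]
      exact Real.exp_lt_one_iff.mpr (by simpa using ht.out)
    have := hasSum_coe_mul_geometric_of_norm_lt_one hlt
    refine this.congr_fun fun n ↦ ?_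
    rw [← Complex.ofReal_pow, ← Real.exp_nat_mul]
    congr 1
    ring_nf
  have h_sum : Summable fun n : ℕ ↦ ‖(n : ℂ)‖ / ((n : ℕ) : ℝ) ^ (s + 3).re := by
    have : Summable fun n : ℕ ↦ (1 : ℝ) / (n : ℝ) ^ (s.re + 2) :=
      Real.summable_one_div_nat_rpow.mpr (by linarith)
    refine this.congr fun n ↦ ?_
    rcases Nat.eq_zero_or_pos n with h | h
    · simp [h, Real.zero_rpow (by linarith : s.re + 2 ≠ 0),
        Real.zero_rpow (by simp [Complex.add_re]; linarith : (s+3).re ≠ 0)]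
    · have hn : (0:ℝ) < n := by positivity
      rw [Complex.norm_natCast]
      have : ((n:ℝ)) ^ (s + 3).re = (n:ℝ) ^ (s.re + 2) * n := by
        rw [show (s+3).re = (s.re + 2) + 1 by simp [Complex.add_re]; ring,
          Real.rpow_add hn, Real.rpow_one]
      rw [this]
      field_simp
  have hmain := hasSum_mellin hp hs3 hF h_sum
  have hterm : ∀ n : ℕ, Complex.Gamma (s + 3) * (n : ℂ) / ((n:ℕ):ℝ) ^ (s + 3) =
      Complex.Gamma (s + 3) * (1 / (n : ℂ) ^ (s + 2)) := by
    intro n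
    rcases Nat.eq_zero_or_pos n with h | h
    · have h2 : s + 2 ≠ 0 := by
        intro hc
        have := congrArg Complex.re hc
        simp [Complex.add_re] at this; linarith
      simp [h, Complex.zero_cpow h2]
    · have hn : ((n:ℝ):ℂ) ≠ 0 := by simp; positivity
      rw [show (s + 3) = (s + 2) + 1 by ring, Complex.cpow_add _ _ hn, Complex.cpow_one]
      push_cast
      push_cast at hn
      rw [mul_div_mul_right _ _ hn, mul_one_div]
  rw [funext hterm] at hmain
  have hmel : mellin F (s + 3) = Complex.Gamma (s + 3) * riemannZeta (s + 2) := by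
    rw [← hmain.tsum_eq, tsum_mul_left, zeta_eq_tsum_one_div_nat_cpow
      (by simp [Complex.add_re]; linarith)]
  -- now relate the integral to the Mellin transform
  have hint : (∫ u in Set.Ioi (0 : ℝ),
      (u : ℂ) ^ s * (3 / Real.pi ^ 2 * (u / 2 / Real.sinh (u / 2)) ^ 2 : ℝ)) =
      3 / (Real.pi:ℂ) ^ 2 * mellin F (s + 3) := by
    rw [mellin, ← integral_const_mul]
    refine setIntegral_congr_fun measurableSet_Ioi fun t ht ↦ ?_
    have ht0 : (0:ℝ) < t := ht
    have hreal : (t / 2 / Real.sinh (t/2))^2 = t^2 * (rexp (-t) / (1 - rexp (-t))^2) := by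
      have h0 : rexp t = rexp (t/2) * rexp (t/2) := by rw [← Real.exp_add]; ring_nf
      have h1 : Real.sinh (t/2) = (rexp (t/2) - (rexp (t/2))⁻¹)/2 := by
        rw [Real.sinh_eq, Real.exp_neg]
      have h2 : rexp (-t) = (rexp (t/2) * rexp (t/2))⁻¹ := by rw [Real.exp_neg, h0]
      have he1 : 1 < rexp (t/2) := by
        rw [Real.one_lt_exp_iff]; linarith
      have heinv : (rexp (t/2))⁻¹ < 1 := by
        rw [inv_lt_one_iff₀]; right; exact he1
      have hd1 : rexp (t/2) - (rexp (t/2))⁻¹ ≠ 0 := by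
        have : (rexp (t/2))⁻¹ < rexp (t/2) := lt_trans heinv he1
        exact sub_ne_zero.mpr (ne_of_gt this)
      have he : rexp (t/2) ≠ 0 := (Real.exp_pos _).ne'
      have hsinh : Real.sinh (t/2) ≠ 0 := ne_of_gt (Real.sinh_pos_iff.mpr (by linarith))
      have hexp : rexp (-t) ≠ 0 := (Real.exp_pos _).ne'
      have hkey : (1 - rexp (-t))^2 = 4 * Real.sinh (t/2)^2 * rexp (-t) := by
        rw [h1, h2]
        field_simp
        ring
      rw [hkey]
      field_simp
      ring
    have htne : (t:ℂ) ≠ 0 := Complex.ofReal_ne_zero.mpr ht0.ne'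
    rw [show s + 3 - 1 = s + 2 by ring,
      Complex.cpow_add _ _ htne, show (2:ℂ) = ((2:ℕ):ℂ) by norm_num,
      Complex.cpow_natCast, hreal]
    simp only [hFdef, smul_eq_mul]
    push_cast
    ring
  rw [hint, hmel]
  ring

/-- The function `q(u) = (3/π²)((u/2)/sinh(u/2))²` is a probability density on `(0,∞)`, and
the random variable `Q` with density `q` satisfies, for every complex `s` with `Re s > −1`,
`E[Q^s] = ∫_0^∞ u^s q(u) du = (3/π²) Γ(s+3) ζ(s+2)`. -/
theorem stmt14 :
    (∀ u : ℝ, 0 ≤ 3 / Real.pi ^ 2 * (u / 2 / Real.sinh (u / 2)) ^ 2) ∧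
    (∫ u in Set.Ioi (0 : ℝ), 3 / Real.pi ^ 2 * (u / 2 / Real.sinh (u / 2)) ^ 2) = 1 ∧
    ∀ s : ℂ, -1 < s.re →
      (∫ u in Set.Ioi (0 : ℝ),
          (u : ℂ) ^ s * (3 / Real.pi ^ 2 * (u / 2 / Real.sinh (u / 2)) ^ 2 : ℝ)) =
        3 / (Real.pi : ℂ) ^ 2 * Complex.Gamma (s + 3) * riemannZeta (s + 2) := by
  refine ⟨fun u ↦ by positivity, ?_, fun s hs ↦ key s hs⟩
  have h0 := key 0 (by norm_num)
  have hG : Complex.Gamma (0 + 3) = 2 := by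
    rw [show (0:ℂ) + 3 = ((2:ℕ):ℂ) + 1 by norm_num, Complex.Gamma_nat_eq_factorial]
    norm_num
  have hz : riemannZeta (0 + 2) = (Real.pi:ℂ)^2 / 6 := by
    rw [show (0:ℂ) + 2 = 2 by norm_num, riemannZeta_two]
  rw [hG, hz] at h0
  have hpi : ((Real.pi:ℂ))^2 ≠ 0 := by
    simp [Real.pi_ne_zero]
  rw [show (3:ℂ) / (Real.pi:ℂ)^2 * 2 * ((Real.pi:ℂ)^2/6) = 1 by field_simp; ring] at h0
  have h1 : (∫ u in Set.Ioi (0 : ℝ),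
      ((3 / Real.pi ^ 2 * (u / 2 / Real.sinh (u / 2)) ^ 2 : ℝ) : ℂ)) = 1 := by
    rw [← h0]
    refine setIntegral_congr_fun measurableSet_Ioi fun t ht ↦ ?_
    rw [Complex.cpow_zero, one_mul]
  have h2 : ((∫ u in Set.Ioi (0:ℝ), 3 / Real.pi ^ 2 * (u / 2 / Real.sinh (u / 2)) ^ 2 : ℝ) : ℂ)
      = 1 := by
    rw [← h1]; exact integral_ofReal.symm
  exact_mod_cast h2
end

section
/- For every complex z with |z| < 1, G(1+z) = exp{ (z/2)(log(2π) − 1) − (1+γ)z²/2 + Σ_{n=3}^∞ (−1)^{n−1} ζ(n−1) z^n / n }, where the series converges absolutely; equivalently, log G(1+z) admits this power series expansion. -/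
set_option maxHeartbeats 1000000 in
/-- For every complex `z` with `|z| < 1`,
`G(1+z) = exp{(z/2)(log(2π) − 1) − (1+γ)z²/2 + ∑_{n=3}^∞ (−1)^{n−1} ζ(n−1) z^n/n}`,
the series converging absolutely (here the series is indexed by `n = m + 3`, `m : ℕ`). -/
theorem stmt16 (z : ℂ) (hz : ‖z‖ < 1) :
    Summable (fun m : ℕ =>
      ‖((-1) ^ (m + 2) * riemannZeta (m + 2) * z ^ (m + 3) / (m + 3) : ℂ)‖) ∧
    barnesG (1 + z) =
      Complex.exp (z / 2 * (Real.log (2 * Real.pi) - 1) -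
        (1 + (Real.eulerMascheroniConstant : ℂ)) * z ^ 2 / 2 +
        ∑' m : ℕ, (-1) ^ (m + 2) * riemannZeta (m + 2) * z ^ (m + 3) / (m + 3)) := by
  set w : ℕ → ℂ := fun n => z / ((n:ℂ)+1) with hw_def
  have hn0 : ∀ n : ℕ, ((n:ℂ)+1) ≠ 0 := by
    intro n
    rw [show ((n:ℂ)+1) = ((n+1:ℕ):ℂ) by push_cast; ring]
    exact Nat.cast_ne_zero.mpr (Nat.succ_ne_zero n)
  have habs : ∀ n : ℕ, ‖((n:ℂ)+1)‖ = (n:ℝ)+1 := by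
    intro n
    rw [show ((n:ℂ)+1) = ((n+1:ℕ):ℂ) by push_cast; ring, Complex.norm_natCast]
    push_cast; ring
  have hw : ∀ n : ℕ, ‖w n‖ < 1 := by
    intro n
    rw [hw_def]
    simp only [norm_div]
    calc ‖z‖ / ‖((n:ℂ)+1)‖ ≤ ‖z‖ / 1 := by
          gcongr
          rw [habs n]
          have := Nat.cast_nonneg (α := ℝ) n
          linarith
      _ < 1 := by simpa using hz
  have hne : ∀ n : ℕ, (1 + w n) ≠ 0 := by
    intro n h
    have h2 : w n = -1 := by linear_combination h
    have h3 := hw n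
    rw [h2] at h3
    simp at h3
  set g : ℕ → ℕ → ℂ := fun n k => (-1)^(k+2) * z^(k+3) / (((k:ℂ)+3) * ((n:ℂ)+1)^(k+2)) with hg_def
  -- Step 1: fiberwise sums in k
  have h1 : ∀ n : ℕ, HasSum (fun k => g n k)
      (((n:ℂ)+1) * Complex.log (1 + w n) + (-z + z^2/(2*((n:ℂ)+1)))) := by
    intro n
    have H := (Complex.hasSum_taylorSeries_log (hw n)).mul_left ((n:ℂ)+1)
    have H3 := (hasSum_nat_add_iff' (f := fun k : ℕ =>
        ((n:ℂ)+1) * ((-1)^(k+1) * (w n)^k / k)) 3).mpr H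
    convert H3 using 1
    · rfl
    · funext k
      rw [hg_def, hw_def]
      simp only
      have hk3 : ((k:ℂ)+3) ≠ 0 := by
        rw [show ((k:ℂ)+3) = ((k+3:ℕ):ℂ) by push_cast; ring]
        exact Nat.cast_ne_zero.mpr (by omega)
      have hp : ((n:ℂ)+1)^(k+3) ≠ 0 := pow_ne_zero _ (hn0 n)
      have hp2 : ((n:ℂ)+1)^(k+2) ≠ 0 := pow_ne_zero _ (hn0 n)
      push_cast
      rw [div_pow]
      field_simp
      ring
    · have hsum : (∑ i ∈ Finset.range 3, ((n:ℂ)+1) * ((-1)^(i+1) * (w n)^i / (i:ℂ)))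
          = z - z^2/(2*((n:ℂ)+1)) := by
        rw [Finset.sum_range_succ, Finset.sum_range_succ, Finset.sum_range_one]
        rw [hw_def]
        simp only [Nat.cast_zero, Nat.cast_one, Nat.cast_ofNat, pow_zero, pow_one, div_zero,
          mul_zero, zero_add]
        rw [div_pow]
        field_simp [hn0 n]
        ring
      rw [hsum]
      ring
  -- norms of g
  have hgnorm : ∀ n k : ℕ, ‖g n k‖ = (‖z‖)^(k+3) / (((k:ℝ)+3) * ((n:ℝ)+1)^(k+2)) := by
    intro n k
    have habs3 : ‖((k:ℂ)+3)‖ = (k:ℝ)+3 := by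
      rw [show ((k:ℂ)+3) = ((k+3:ℕ):ℂ) by push_cast; ring, Complex.norm_natCast]
      push_cast; ring
    rw [hg_def]
    simp only [norm_div, norm_mul, norm_pow, norm_neg, norm_one, one_pow, one_mul,
      habs3, habs n]
  -- summability of the double family in norm
  have hs1 : Summable (fun n : ℕ => 1/((n:ℝ)+1)^2) := by
    have := (summable_nat_add_iff (f := fun n : ℕ => 1/(n:ℝ)^2) 1).mpr
      (Real.summable_one_div_nat_pow.mpr one_lt_two)
    refine this.congr fun n => ?_
    push_cast; ring
  have hs2 : Summable (fun k : ℕ => (‖z‖)^k) :=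
    summable_geometric_of_lt_one (norm_nonneg _) hz
  have hmaj : Summable (fun p : ℕ × ℕ => (1/((p.1:ℝ)+1)^2) * (‖z‖)^p.2) :=
    hs1.mul_of_nonneg hs2 (fun n => by positivity) (fun k => by positivity)
  have hbound : ∀ p : ℕ × ℕ, ‖g p.1 p.2‖ ≤ (1/((p.1:ℝ)+1)^2) * (‖z‖)^p.2 := by
    rintro ⟨n, k⟩
    rw [hgnorm n k]
    have hn1 : (1:ℝ) ≤ (n:ℝ)+1 := by
      have := Nat.cast_nonneg (α := ℝ) n; linarith
    calc (‖z‖)^(k+3) / (((k:ℝ)+3) * ((n:ℝ)+1)^(k+2))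
        ≤ (‖z‖)^k / (1 * ((n:ℝ)+1)^2) := by
          apply div_le_div₀ (by positivity)
          · exact pow_le_pow_of_le_one (norm_nonneg _) hz.le (by omega)
          · positivity
          · apply mul_le_mul
            · linarith [Nat.cast_nonneg (α := ℝ) k]
            · exact pow_le_pow_right₀ hn1 (by omega)
            · positivity
            · linarith [Nat.cast_nonneg (α := ℝ) k]
      _ = (1/((n:ℝ)+1)^2) * (‖z‖)^k := by ring
  have hgs : Summable (fun p : ℕ × ℕ => ‖g p.1 p.2‖) :=
    hmaj.of_nonneg_of_le (fun p => norm_nonneg _) hbound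
  have hg : Summable (fun p : ℕ × ℕ => g p.1 p.2) := hgs.of_norm
  set T : ℂ := ∑' p : ℕ × ℕ, g p.1 p.2 with hT_def
  have hT : HasSum (fun p : ℕ × ℕ => g p.1 p.2) T := hg.hasSum
  -- Step 2: fiberwise sums in n, giving zeta values
  have h2 : ∀ k : ℕ, HasSum (fun n => g n k)
      ((-1)^(k+2) * riemannZeta ((k:ℂ)+2) * z^(k+3) / ((k:ℂ)+3)) := by
    intro k
    have hsummn : Summable (fun n : ℕ => 1/((n:ℂ)+1)^(k+2)) := by
      apply Summable.of_norm
      apply hs1.of_nonneg_of_le (fun n => norm_nonneg _)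
      intro n
      rw [norm_div, norm_one, norm_pow, habs n]
      have hn1 : (1:ℝ) ≤ (n:ℝ)+1 := by
        have := Nat.cast_nonneg (α := ℝ) n; linarith
      apply div_le_div₀ one_pos.le le_rfl (by positivity)
      exact pow_le_pow_right₀ hn1 (by omega)
    have hzeta : riemannZeta ((k:ℂ)+2) = ∑' n : ℕ, 1/((n:ℂ)+1)^(k+2) := by
      rw [show ((k:ℂ)+2) = ((k+2:ℕ):ℂ) by push_cast; ring,
        zeta_eq_tsum_one_div_nat_add_one_cpow (by
          rw [Complex.natCast_re]; exact_mod_cast (by omega : 1 < k+2))]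
      refine tsum_congr fun n => ?_
      rw [Complex.cpow_natCast]
    have hsn : HasSum (fun n : ℕ => 1/((n:ℂ)+1)^(k+2)) (riemannZeta ((k:ℂ)+2)) := by
      rw [hzeta]; exact hsummn.hasSum
    have hk3 : ((k:ℂ)+3) ≠ 0 := by
      rw [show ((k:ℂ)+3) = ((k+3:ℕ):ℂ) by push_cast; ring]
      exact Nat.cast_ne_zero.mpr (by omega)
    have H := hsn.mul_left ((-1)^(k+2) * z^(k+3) / ((k:ℂ)+3))
    convert H using 1
    · rfl
    · funext n
      rw [hg_def]
      simp only
      have hp2 : ((n:ℂ)+1)^(k+2) ≠ 0 := pow_ne_zero _ (hn0 n)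
      field_simp
    · ring
  -- sums over n and over k both equal T MARKER
  have hfsum : HasSum (fun n : ℕ => ((n:ℂ)+1) * Complex.log (1 + w n)
      + (-z + z^2/(2*((n:ℂ)+1)))) T := hT.prod_fiberwise h1
  have hswap : HasSum (fun p : ℕ × ℕ => g p.2 p.1) T :=
    ((Equiv.prodComm ℕ ℕ).hasSum_iff).mpr hT
  have hk : HasSum (fun k : ℕ => (-1)^(k+2) * riemannZeta ((k:ℂ)+2) * z^(k+3) / ((k:ℂ)+3)) T :=
    hswap.prod_fiberwise h2
  constructor
  · -- absolute convergence
    have hgs' : Summable (fun p : ℕ × ℕ => ‖g p.2 p.1‖) :=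
      ((Equiv.prodComm ℕ ℕ).summable_iff).mpr hgs
    have fibers : ∀ k : ℕ, Summable (fun n => ‖g n k‖) := by
      intro k
      exact hgs.comp_injective (i := fun n => (n, k)) (fun a b h => (Prod.ext_iff.mp h).1)
    have htsumnorm : Summable (fun k => ∑' n, ‖g n k‖) :=
      (hgs'.hasSum.prod_fiberwise (fun k => (fibers k).hasSum)).summable
    apply htsumnorm.of_nonneg_of_le (fun m => norm_nonneg _)
    intro m
    rw [← (h2 m).tsum_eq]
    exact norm_tsum_le_tsum_norm (fibers m)
  · -- the identity
    have hfac : ∀ n : ℕ, (1 + w n)^(n+1) * Complex.exp (-z + z^2/(2*((n:ℂ)+1)))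
        = Complex.exp (((n:ℂ)+1) * Complex.log (1 + w n) + (-z + z^2/(2*((n:ℂ)+1)))) := by
      intro n
      have hpw : (1 + w n)^(n+1) = Complex.exp (((n:ℂ)+1) * Complex.log (1 + w n)) := by
        conv_lhs => rw [← Complex.exp_log (hne n)]
        rw [← Complex.exp_nat_mul]
        congr 1
        push_cast
        ring
      rw [hpw, ← Complex.exp_add]
    have hprod : HasProd (fun n : ℕ => Complex.exp (((n:ℂ)+1) * Complex.log (1 + w n)
        + (-z + z^2/(2*((n:ℂ)+1))))) (Complex.exp T) := hfsum.cexp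
    rw [barnesG]
    simp only [add_sub_cancel_left]
    rw [tprod_congr hfac, hprod.tprod_eq]
    have h2pi : ((2:ℂ) * (Real.pi:ℂ)) ≠ 0 := by
      simp [Real.pi_ne_zero]
    have hlog : Complex.log ((2:ℂ) * (Real.pi:ℂ)) = ((Real.log (2*Real.pi) : ℝ) : ℂ) := by
      rw [show ((2:ℂ)*(Real.pi:ℂ)) = ((2*Real.pi : ℝ):ℂ) by push_cast; ring,
        ← Complex.ofReal_log (by positivity)]
    rw [Complex.cpow_def_of_ne_zero h2pi, ← Complex.exp_add, ← Complex.exp_add]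
    rw [← hk.tsum_eq]
    rw [hlog]
    ring
end

section
/- Let f : (0,∞) → [0,∞) be a Borel function with ∫_0^∞ log(1 + f(u)) du < ∞. Then for every λ ≥ 0, ∫_0^∞ du ∫_0^∞ (dx/x) e^{−x} (1 − e^{−λ f(u) x}) = ∫_0^∞ (dy/y) (∫_0^∞ du e^{−y/f(u)}) (1 − e^{−λy}), where e^{−y/f(u)} is interpreted as 0 when f(u) = 0, and both double integrals are finite. Consequently, the random variable Y = ∫_0^∞ f(u) dγ_u (integral of f against a standard gamma subordinator) satisfies E[e^{−λY}] = exp(−∫_0^∞ (dy/y)(∫_0^∞ du e^{−y/f(u)})(1 − e^{−λy})), so Y is a generalized gamma convolution variable. -/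
open MeasureTheory

open Real Set in
private lemma aux_exp_Ioi {t : ℝ} (ht : 0 < t) :
    ∫⁻ y in Set.Ioi (0 : ℝ), ENNReal.ofReal (Real.exp (-(t * y))) = ENNReal.ofReal (1 / t) := by
  rw [← ofReal_integral_eq_lintegral_ofReal]
  · congr 1
    have h := integral_comp_mul_left_Ioi (fun x => Real.exp (-x)) 0 ht
    simp only [mul_zero, integral_exp_neg_Ioi, neg_zero, Real.exp_zero, smul_eq_mul,
      mul_one] at h
    rw [h, one_div]
  · exact (by simpa [neg_mul] using exp_neg_integrableOn_Ioi 0 ht :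
      IntegrableOn (fun y => Real.exp (-(t * y))) (Set.Ioi 0))
  · exact Filter.Eventually.of_forall fun y => (Real.exp_pos _).le

open Real Set in
private lemma aux_frullani_pointwise {a b y : ℝ} (ha : 0 < a) (hb : 0 ≤ b) (hy : 0 < y) :
    ∫⁻ t in Set.Ioo a (a + b), ENNReal.ofReal (Real.exp (-(t * y))) =
      ENNReal.ofReal (Real.exp (-(a * y)) * (1 - Real.exp (-(b * y))) / y) := by
  rw [← ofReal_integral_eq_lintegral_ofReal]
  · congr 1
    rw [← integral_Ioc_eq_integral_Ioo,
      ← intervalIntegral.integral_of_le (by linarith : a ≤ a + b)]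
    have h1 : ∀ t : ℝ, Real.exp (-(t * y)) = (fun s => Real.exp (-s)) (y * t) := by
      intro t; simp [mul_comm]
    simp only [h1]
    rw [intervalIntegral.integral_comp_mul_left (fun s => Real.exp (-s)) hy.ne']
    have h2 : ∀ s : ℝ, Real.exp (-s) = (fun z => Real.exp z) (-s) := fun _ => rfl
    rw [intervalIntegral.integral_comp_neg fun z => Real.exp z, integral_exp]
    have : -(y * (a + b)) = -(y * a) + -(y * b) := by ring
    rw [this, Real.exp_add]
    have hya : -(y * a) = -(a * y) := by ring
    have hyb : -(y * b) = -(b * y) := by ring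
    rw [hya, hyb]
    field_simp
    have hyy : y * y⁻¹ = 1 := mul_inv_cancel₀ hy.ne'
    linear_combination (Real.exp (-(y * a)) - Real.exp (-(y * a)) * Real.exp (-(y * b))) * hyy
  · have hcont : Continuous fun t : ℝ => Real.exp (-(t * y)) := by fun_prop
    exact (hcont.integrableOn_Icc (a := a) (b := a + b)).mono_set Set.Ioo_subset_Icc_self
  · exact Filter.Eventually.of_forall fun t => (Real.exp_pos _).le

open Real Set in
private lemma aux_frullani {a b : ℝ} (ha : 0 < a) (hb : 0 ≤ b) :
    ∫⁻ y in Set.Ioi (0 : ℝ),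
        ENNReal.ofReal (Real.exp (-(a * y)) * (1 - Real.exp (-(b * y))) / y) =
      ENNReal.ofReal (Real.log ((a + b) / a)) := by
  calc
    ∫⁻ y in Set.Ioi (0 : ℝ),
        ENNReal.ofReal (Real.exp (-(a * y)) * (1 - Real.exp (-(b * y))) / y)
      = ∫⁻ y in Set.Ioi (0 : ℝ), ∫⁻ t in Set.Ioo a (a + b),
          ENNReal.ofReal (Real.exp (-(t * y))) := by
        refine setLIntegral_congr_fun measurableSet_Ioi ?_
        exact fun y hy =>
          (aux_frullani_pointwise ha hb hy).symm
    _ = ∫⁻ t in Set.Ioo a (a + b), ∫⁻ y in Set.Ioi (0 : ℝ),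
          ENNReal.ofReal (Real.exp (-(t * y))) := by
        refine lintegral_lintegral_swap ?_
        apply Measurable.aemeasurable
        exact (measurable_snd.mul measurable_fst).neg.exp.ennreal_ofReal
    _ = ∫⁻ t in Set.Ioo a (a + b), ENNReal.ofReal (1 / t) := by
        refine setLIntegral_congr_fun measurableSet_Ioo ?_
        exact fun t ht => aux_exp_Ioi (ha.trans ht.1)
    _ = ENNReal.ofReal (Real.log ((a + b) / a)) := by
        rw [← ofReal_integral_eq_lintegral_ofReal]
        · congr 1
          rw [← integral_Ioc_eq_integral_Ioo,
            ← intervalIntegral.integral_of_le (by linarith : a ≤ a + b)]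
          exact integral_one_div (by
            intro h
            rcases Set.mem_uIcc.1 h with ⟨h1, _⟩ | ⟨_, h2⟩ <;> linarith)
        · have hcont : ContinuousOn (fun t : ℝ => 1 / t) (Set.Icc a (a + b)) := by
            apply ContinuousOn.div continuousOn_const continuousOn_id
            intro t ht
            exact (ha.trans_le ht.1).ne'
          exact (hcont.integrableOn_Icc).mono_set Set.Ioo_subset_Icc_self
        · refine (ae_restrict_iff' measurableSet_Ioo).2 ?_
          refine Filter.Eventually.of_forall fun t ht => ?_
          have htpos : 0 < t := ha.trans ht.1
          positivity

open Real Set in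
private lemma aux_inner {c : ℝ} (hc : 0 ≤ c) :
    ∫⁻ x in Set.Ioi (0 : ℝ),
        ENNReal.ofReal (Real.exp (-x) * (1 - Real.exp (-(c * x))) / x) =
      ENNReal.ofReal (Real.log (1 + c)) := by
  have h := aux_frullani one_pos hc
  simpa using h

open Real Set in
private lemma aux_log_bound {c l : ℝ} (hc : 0 ≤ c) (hl : 0 ≤ l) :
    Real.log (1 + l * c) ≤ max 1 l * Real.log (1 + c) := by
  have h1c : (0:ℝ) < 1 + c := by linarith
  have hlogc : 0 ≤ Real.log (1 + c) := Real.log_nonneg (by linarith)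
  rcases le_total l 1 with h | h
  · have : Real.log (1 + l * c) ≤ Real.log (1 + c) := by
      apply Real.log_le_log (by nlinarith)
      nlinarith
    calc Real.log (1 + l * c) ≤ Real.log (1 + c) := this
      _ = 1 * Real.log (1 + c) := (one_mul _).symm
      _ ≤ max 1 l * Real.log (1 + c) := by
        apply mul_le_mul_of_nonneg_right (le_max_left _ _) hlogc
  · have hber : 1 + l * c ≤ (1 + c) ^ l :=
      one_add_mul_self_le_rpow_one_add (by linarith) h
    calc Real.log (1 + l * c) ≤ Real.log ((1 + c) ^ l) :=
          Real.log_le_log (by nlinarith) hber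
      _ = l * Real.log (1 + c) := Real.log_rpow h1c l
      _ ≤ max 1 l * Real.log (1 + c) := by
        apply mul_le_mul_of_nonneg_right (le_max_right _ _) hlogc

/-- Let `f : (0,∞) → [0,∞)` be Borel with `∫_0^∞ log(1 + f(u)) du < ∞`. Then for every
`λ ≥ 0`,
`∫_0^∞ du ∫_0^∞ (dx/x) e^{−x}(1 − e^{−λ f(u) x})
  = ∫_0^∞ (dy/y)(∫_0^∞ du e^{−y/f(u)})(1 − e^{−λy})`,
where `e^{−y/f(u)}` is interpreted as `0` when `f(u) = 0`, and both (nonnegative) double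
integrals are finite. (Consequently, `Y = ∫_0^∞ f(u) dγ_u` has Laplace transform
`exp` of minus this quantity, so `Y` is a generalized gamma convolution variable.) -/
theorem stmt17 (f : ℝ → ℝ) (hf : Measurable f) (hf0 : ∀ u, 0 ≤ f u)
    (hlog : IntegrableOn (fun u => Real.log (1 + f u)) (Set.Ioi 0))
    (l : ℝ) (hl : 0 ≤ l) :
    (∫⁻ u in Set.Ioi (0 : ℝ), ∫⁻ x in Set.Ioi (0 : ℝ),
        ENNReal.ofReal (Real.exp (-x) * (1 - Real.exp (-(l * f u * x))) / x)) =
      (∫⁻ y in Set.Ioi (0 : ℝ),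
        (∫⁻ u in Set.Ioi (0 : ℝ),
            ENNReal.ofReal (if f u = 0 then 0 else Real.exp (-(y / f u)))) *
          ENNReal.ofReal ((1 - Real.exp (-(l * y))) / y)) ∧
    (∫⁻ u in Set.Ioi (0 : ℝ), ∫⁻ x in Set.Ioi (0 : ℝ),
        ENNReal.ofReal (Real.exp (-x) * (1 - Real.exp (-(l * f u * x))) / x)) < ⊤ := by
  -- the common value
  have hL : (∫⁻ u in Set.Ioi (0 : ℝ), ∫⁻ x in Set.Ioi (0 : ℝ),
        ENNReal.ofReal (Real.exp (-x) * (1 - Real.exp (-(l * f u * x))) / x)) =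
      ∫⁻ u in Set.Ioi (0 : ℝ), ENNReal.ofReal (Real.log (1 + l * f u)) := by
    refine lintegral_congr fun u => ?_
    exact aux_inner (mul_nonneg hl (hf0 u))
  have hR : (∫⁻ y in Set.Ioi (0 : ℝ),
        (∫⁻ u in Set.Ioi (0 : ℝ),
            ENNReal.ofReal (if f u = 0 then 0 else Real.exp (-(y / f u)))) *
          ENNReal.ofReal ((1 - Real.exp (-(l * y))) / y)) =
      ∫⁻ u in Set.Ioi (0 : ℝ), ENNReal.ofReal (Real.log (1 + l * f u)) := by
    calc
      (∫⁻ y in Set.Ioi (0 : ℝ),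
          (∫⁻ u in Set.Ioi (0 : ℝ),
              ENNReal.ofReal (if f u = 0 then 0 else Real.exp (-(y / f u)))) *
            ENNReal.ofReal ((1 - Real.exp (-(l * y))) / y))
        = ∫⁻ y in Set.Ioi (0 : ℝ), ∫⁻ u in Set.Ioi (0 : ℝ),
            ENNReal.ofReal (if f u = 0 then 0 else Real.exp (-(y / f u))) *
              ENNReal.ofReal ((1 - Real.exp (-(l * y))) / y) := by
          refine lintegral_congr fun y => ?_
          exact (lintegral_mul_const' _ _ ENNReal.ofReal_ne_top).symm
      _ = ∫⁻ u in Set.Ioi (0 : ℝ), ∫⁻ y in Set.Ioi (0 : ℝ),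
            ENNReal.ofReal (if f u = 0 then 0 else Real.exp (-(y / f u))) *
              ENNReal.ofReal ((1 - Real.exp (-(l * y))) / y) := by
          refine lintegral_lintegral_swap ?_
          apply Measurable.aemeasurable
          have h1 : Measurable fun p : ℝ × ℝ =>
              (if f p.2 = 0 then 0 else Real.exp (-(p.1 / f p.2))) := by
            refine Measurable.ite ?_ measurable_const ?_
            · exact (hf.comp measurable_snd) (measurableSet_singleton 0)
            · exact ((measurable_fst.div (hf.comp measurable_snd)).neg).exp
          exact h1.ennreal_ofReal.mul
            ((measurable_const.mul measurable_fst).neg.exp.const_sub 1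
              |>.div measurable_fst).ennreal_ofReal
      _ = ∫⁻ u in Set.Ioi (0 : ℝ), ENNReal.ofReal (Real.log (1 + l * f u)) := by
          refine lintegral_congr fun u => ?_
          by_cases hfu : f u = 0
          · simp [hfu]
          · have hs : 0 < f u := lt_of_le_of_ne (hf0 u) (Ne.symm hfu)
            have key := aux_frullani (a := (f u)⁻¹) (b := l) (inv_pos.2 hs) hl
            have heq : ∀ y : ℝ,
                ENNReal.ofReal (if f u = 0 then 0 else Real.exp (-(y / f u))) *
                    ENNReal.ofReal ((1 - Real.exp (-(l * y))) / y) =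
                  ENNReal.ofReal
                    (Real.exp (-((f u)⁻¹ * y)) * (1 - Real.exp (-(l * y))) / y) := by
              intro y
              rw [if_neg hfu, ← ENNReal.ofReal_mul (Real.exp_pos _).le]
              congr 1
              rw [div_eq_inv_mul y (f u)]
              ring
            simp only [heq]
            rw [key]
            congr 1
            congr 1
            field_simp
  have hfin : (∫⁻ u in Set.Ioi (0 : ℝ),
      ENNReal.ofReal (Real.log (1 + l * f u))) < ⊤ := by
    have hbound : (∫⁻ u in Set.Ioi (0 : ℝ),
        ENNReal.ofReal (Real.log (1 + l * f u))) ≤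
        ENNReal.ofReal (max 1 l) *
          ∫⁻ u in Set.Ioi (0 : ℝ), ENNReal.ofReal (Real.log (1 + f u)) := by
      rw [← lintegral_const_mul' _ _ ENNReal.ofReal_ne_top]
      refine lintegral_mono fun u => ?_
      rw [← ENNReal.ofReal_mul (le_trans zero_le_one (le_max_left 1 l))]
      exact ENNReal.ofReal_le_ofReal (aux_log_bound (hf0 u) hl)
    refine lt_of_le_of_lt hbound ?_
    refine ENNReal.mul_lt_top ENNReal.ofReal_lt_top ?_
    have h2 : (∫⁻ u in Set.Ioi (0 : ℝ), ENNReal.ofReal (Real.log (1 + f u))) ≤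
        ∫⁻ u in Set.Ioi (0 : ℝ), (‖Real.log (1 + f u)‖₊ : ENNReal) :=
      lintegral_mono fun u => Real.ofReal_le_enorm _
    exact lt_of_le_of_lt h2 hlog.2
  exact ⟨hL.trans hR.symm, hL ▸ hfin⟩
end
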